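/- arXiv:1304.6008 — 9 statements merged into one kernel-verified Lean document; each statement's English description precedes it below -/
import Mathlib

section
/- For every integer d ≥ 2 and every natural number n, the d-dimensional Catalan number satisfies the Pochhammer identity C_d(n) = d^{dn} · (∏_{k=1}^{d} (k/d)_n) / (n! · ∏_{k=2}^{d} (k)_n), where (a)_n = a(a+1)⋯(a+n-1) is the ascending factorial. (Equivalently, the ordinary generating function of C_d(n) is the generalized hypergeometric series _dF_{d-1} with upper parameters 1/d, 2/d, …, d/d, lower parameters 2, 3, …, d, and argument d^d z.) -/
open Finset

/-- The `d`-dimensional Catalan number `C_d(n)`. -/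
noncomputable def catalanD (d n : ℕ) : ℝ :=
  (∏ p ∈ Finset.range d, (p.factorial : ℝ) / ((n + p).factorial : ℝ)) *
    ((d * n).factorial : ℝ)

/-- Ascending factorial (Pochhammer symbol) `(a)_n = a (a+1) ⋯ (a+n-1)`. -/
noncomputable def ascFactorial (a : ℝ) (n : ℕ) : ℝ :=
  ∏ i ∈ Finset.range n, (a + i)

lemma fact_add (m e : ℕ) :
    (((m + e).factorial : ℕ) : ℝ) = (m.factorial : ℝ) * ∏ k ∈ Icc 1 e, ((m : ℝ) + k) := by
  induction e with
  | zero => simp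
  | succ e ih =>
    rw [show m + (e+1) = (m+e)+1 from rfl, Nat.factorial_succ]
    push_cast
    rw [ih, Finset.prod_Icc_succ_top (by omega)]
    push_cast; ring

lemma key2 (m n : ℕ) :
    ascFactorial ((m:ℝ)+1) n = ((m+n).factorial : ℝ) / (m.factorial : ℝ) := by
  rw [fact_add m n]
  rw [show Icc 1 n = Ico 1 (n+1) from rfl, Finset.prod_Ico_eq_prod_range]
  rw [eq_div_iff (by positivity)]
  rw [ascFactorial, mul_comm]
  congr 1
  apply Finset.prod_congr rfl
  intro i _
  push_cast
  ring

lemma key1 (d : ℕ) (hd : 1 ≤ d) (n : ℕ) :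
    (d:ℝ) ^ (d * n) * ∏ k ∈ Finset.Icc 1 d, ascFactorial ((k : ℝ) / d) n
      = (((d*n).factorial : ℕ) : ℝ) := by
  have hd0 : (d:ℝ) ≠ 0 := by positivity
  induction n with
  | zero => simp [ascFactorial]
  | succ n ih =>
    have step : ∀ k ∈ Icc 1 d, ascFactorial ((k : ℝ) / d) (n+1)
        = ascFactorial ((k : ℝ) / d) n * ((k:ℝ)/d + n) := fun k _ => prod_range_succ _ _
    rw [Finset.prod_congr rfl step, Finset.prod_mul_distrib]
    rw [show d * (n+1) = d * n + d from by ring, pow_add]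
    have hdd : (d:ℝ)^d = ∏ k ∈ Icc 1 d, (d:ℝ) := by
      rw [Finset.prod_const, Nat.card_Icc]; norm_num
    have h2 : (d:ℝ)^d * ∏ k ∈ Icc 1 d, ((k:ℝ)/d + n)
        = ∏ k ∈ Icc 1 d, ((d:ℝ)*n + k) := by
      rw [hdd, ← Finset.prod_mul_distrib]
      apply Finset.prod_congr rfl
      intro k _
      field_simp
      ring
    rw [fact_add (d*n) d]
    push_cast
    calc (d:ℝ)^(d*n) * (d:ℝ)^d * ((∏ k ∈ Icc 1 d, ascFactorial ((k:ℝ)/d) n) * ∏ k ∈ Icc 1 d, ((k:ℝ)/d + n))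
        = ((d:ℝ)^(d*n) * ∏ k ∈ Icc 1 d, ascFactorial ((k:ℝ)/d) n) * ((d:ℝ)^d * ∏ k ∈ Icc 1 d, ((k:ℝ)/d + n)) := by ring
      _ = (((d*n).factorial : ℕ):ℝ) * ∏ k ∈ Icc 1 d, ((d:ℝ)*n + k) := by rw [ih, h2]

theorem catalanD_pochhammer (d : ℕ) (hd : 2 ≤ d) (n : ℕ) :
    catalanD d n =
      (d : ℝ) ^ (d * n) * (∏ k ∈ Finset.Icc 1 d, ascFactorial ((k : ℝ) / d) n) /
        ((n.factorial : ℝ) * ∏ k ∈ Finset.Icc 2 d, ascFactorial (k : ℝ) n) := by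
  rw [key1 d (by omega) n]
  have hden : (n.factorial : ℝ) * ∏ k ∈ Finset.Icc 2 d, ascFactorial (k : ℝ) n
      = ∏ p ∈ Finset.range d, (((n+p).factorial : ℝ) / (p.factorial : ℝ)) := by
    have h1 : ∏ k ∈ Finset.Icc 2 d, ascFactorial (k : ℝ) n
        = ∏ i ∈ Finset.range (d-1), (((i+1+n).factorial : ℝ) / ((i+1).factorial : ℝ)) := by
      rw [show Icc 2 d = Ico 2 (d+1) from rfl, Finset.prod_Ico_eq_prod_range]
      rw [show d + 1 - 2 = d - 1 from by omega]
      apply Finset.prod_congr rfl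
      intro i _
      rw [show ((2 + i : ℕ) : ℝ) = ((i+1 : ℕ) : ℝ) + 1 from by push_cast; ring]
      rw [key2 (i+1) n]
    have h2 : ∏ p ∈ Finset.range d, (((n+p).factorial : ℝ) / (p.factorial : ℝ))
        = (∏ i ∈ Finset.range (d-1), (((n+(i+1)).factorial : ℝ) / ((i+1).factorial : ℝ)))
          * (((n+0).factorial : ℝ) / ((0:ℕ).factorial : ℝ)) := by
      rw [show d = (d-1)+1 from by omega]
      exact Finset.prod_range_succ' _ _
    rw [h1, h2]
    simp only [Nat.add_zero, Nat.factorial_zero, Nat.cast_one, div_one]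
    rw [mul_comm]
    congr 1
    apply Finset.prod_congr rfl
    intro i _
    rw [show i+1+n = n+(i+1) from by omega]
  rw [hden, catalanD, Finset.prod_div_distrib]
  rw [Finset.prod_div_distrib]
  have hA : (∏ p ∈ Finset.range d, ((n+p).factorial : ℝ)) ≠ 0 := by
    apply Finset.prod_ne_zero_iff.2; intro p _; positivity
  have hB : (∏ p ∈ Finset.range d, ((p).factorial : ℝ)) ≠ 0 := by
    apply Finset.prod_ne_zero_iff.2; intro p _; positivity
  field_simp
end

section
/- For every integer d ≥ 2, the sequence n ↦ (C_d(n))^{1/n} converges to d^d as n → ∞. Consequently the power series ∑_n C_d(n) z^n has radius of convergence d^{-d}. -/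
open Finset Filter Topology

noncomputable def catRatio (d n : ℕ) : ℝ :=
  ∏ p ∈ Finset.range d, ((d * n + p + 1 : ℕ) : ℝ) / ((n + p + 1 : ℕ) : ℝ)

lemma catalanD_pos (d n : ℕ) : 0 < catalanD d n := by
  unfold catalanD
  apply mul_pos
  · exact Finset.prod_pos fun p _ => div_pos
      (by exact_mod_cast p.factorial_pos) (by exact_mod_cast (n + p).factorial_pos)
  · exact_mod_cast (d * n).factorial_pos

lemma catRatio_pos (d n : ℕ) : 0 < catRatio d n := by
  unfold catRatio
  exact Finset.prod_pos fun p _ => div_pos (by positivity) (by positivity)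

lemma fact_add_s2 (a b : ℕ) :
    (a + b).factorial = a.factorial * ∏ j ∈ Finset.range b, (a + j + 1) := by
  induction b with
  | zero => simp
  | succ b ih =>
      have h : a + (b + 1) = (a + b) + 1 := by omega
      rw [h, Nat.factorial_succ, ih, Finset.prod_range_succ]
      ring

lemma catalanD_succ (d n : ℕ) :
    catalanD d (n + 1) = catalanD d n * catRatio d n := by
  unfold catalanD catRatio
  have hfa : ((d * (n + 1)).factorial : ℝ)
      = ((d * n).factorial : ℝ) * ∏ p ∈ Finset.range d, ((d * n + p + 1 : ℕ) : ℝ) := by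
    have h : d * (n + 1) = d * n + d := by ring
    rw [h, fact_add_s2]
    push_cast
    ring
  have hfp : ∀ p : ℕ, (((n + 1) + p).factorial : ℝ)
      = ((n + p).factorial : ℝ) * ((n + p + 1 : ℕ) : ℝ) := by
    intro p
    have h : (n + 1) + p = (n + p) + 1 := by omega
    rw [h, Nat.factorial_succ]
    push_cast
    ring
  simp only [hfa, hfp]
  have key : (∏ p ∈ Finset.range d,
        (p.factorial : ℝ) / (((n + p).factorial : ℝ) * ((n + p + 1 : ℕ) : ℝ))) *
      ∏ p ∈ Finset.range d, ((d * n + p + 1 : ℕ) : ℝ)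
      = (∏ p ∈ Finset.range d, (p.factorial : ℝ) / ((n + p).factorial : ℝ)) *
      ∏ p ∈ Finset.range d, ((d * n + p + 1 : ℕ) : ℝ) / ((n + p + 1 : ℕ) : ℝ) := by
    rw [← Finset.prod_mul_distrib, ← Finset.prod_mul_distrib]
    refine Finset.prod_congr rfl fun p _ => ?_
    have h1 : ((n + p).factorial : ℝ) ≠ 0 := by exact_mod_cast (n + p).factorial_ne_zero
    have h2 : ((n + p + 1 : ℕ) : ℝ) ≠ 0 := by positivity
    field_simp
  linear_combination ((d * n).factorial : ℝ) * key

lemma log_catalanD (d n : ℕ) :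
    Real.log (catalanD d n) = ∑ k ∈ Finset.range n, Real.log (catRatio d k) := by
  induction n with
  | zero =>
      have : catalanD d 0 = 1 := by
        unfold catalanD
        simp [div_self, Nat.cast_ne_zero.mpr (Nat.factorial_ne_zero _)]
      simp [this]
  | succ n ih =>
      rw [catalanD_succ, Real.log_mul (catalanD_pos d n).ne' (catRatio_pos d n).ne', ih,
        Finset.sum_range_succ]

lemma catRatio_tendsto (d : ℕ) (hd : 1 ≤ d) :
    Tendsto (fun n : ℕ => catRatio d n) atTop (𝓝 ((d : ℝ) ^ d)) := by
  have hpow : ((d : ℝ) ^ d) = ∏ _p ∈ Finset.range d, (d : ℝ) := by simp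
  rw [hpow]
  unfold catRatio
  refine tendsto_finset_prod _ fun p _ => ?_
  have h1 : Tendsto (fun n : ℕ => ((d : ℝ) + (p + 1) / n) / (1 + (p + 1) / n)) atTop
      (𝓝 (((d : ℝ) + 0) / (1 + 0))) := by
    refine Tendsto.div (tendsto_const_nhds.add ?_) (tendsto_const_nhds.add ?_) (by norm_num)
    · exact tendsto_const_div_atTop_nhds_zero_nat _
    · exact tendsto_const_div_atTop_nhds_zero_nat _
  simp only [add_zero] at h1
  rw [div_one] at h1
  refine Tendsto.congr' ?_ h1
  filter_upwards [eventually_ge_atTop 1] with n hn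
  have hn0 : ((n : ℝ)) ≠ 0 := by positivity
  push_cast
  field_simp
  ring

/-- `(C_d(n))^{1/n} → d^d`, and consequently the power series `∑ C_d(n) z^n`
has radius of convergence `d^{-d}`. -/
theorem catalanD_root_limit (d : ℕ) (hd : 2 ≤ d) :
    Filter.Tendsto (fun n : ℕ => (catalanD d n) ^ ((1 : ℝ) / n)) Filter.atTop
        (𝓝 ((d : ℝ) ^ (d : ℕ))) ∧
      (∀ z : ℝ, |z| < ((d : ℝ) ^ (d : ℕ))⁻¹ →
        Summable (fun n : ℕ => catalanD d n * z ^ n)) ∧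
      (∀ z : ℝ, ((d : ℝ) ^ (d : ℕ))⁻¹ < |z| →
        ¬ Summable (fun n : ℕ => catalanD d n * z ^ n)) := by
  have hd1 : 1 ≤ d := le_trans (by norm_num) hd
  have hdpos : (0 : ℝ) < d := by exact_mod_cast lt_of_lt_of_le (by norm_num) hd
  have hddpos : (0 : ℝ) < (d : ℝ) ^ d := by positivity
  have hratio := catRatio_tendsto d hd1
  -- part 1
  have hlog : Tendsto (fun n : ℕ => Real.log (catRatio d n)) atTop
      (𝓝 ((d : ℝ) * Real.log d)) := by
    have := hratio.log (by positivity)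
    rwa [Real.log_pow] at this
  have hces := hlog.cesaro
  have h2 : Tendsto (fun n : ℕ => ((n : ℝ))⁻¹ * Real.log (catalanD d n)) atTop
      (𝓝 ((d : ℝ) * Real.log d)) :=
    hces.congr fun n => by rw [← log_catalanD]
  have part1 : Tendsto (fun n : ℕ => (catalanD d n) ^ ((1 : ℝ) / n)) atTop
      (𝓝 ((d : ℝ) ^ (d : ℕ))) := by
    have h3 := (Real.continuous_exp.tendsto _).comp h2
    have hexp : Real.exp ((d : ℝ) * Real.log d) = (d : ℝ) ^ (d : ℕ) := by
      rw [← Real.log_pow, Real.exp_log hddpos]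
    rw [hexp] at h3
    refine h3.congr fun n => ?_
    rw [Function.comp_apply, Real.rpow_def_of_pos (catalanD_pos d n)]
    ring_nf
  have hnorm : ∀ z : ℝ, z ≠ 0 →
      Tendsto (fun n : ℕ => ‖catalanD d (n + 1) * z ^ (n + 1)‖ / ‖catalanD d n * z ^ n‖)
        atTop (𝓝 ((d : ℝ) ^ d * |z|)) := by
    intro z hz
    have heq : ∀ n : ℕ, ‖catalanD d (n + 1) * z ^ (n + 1)‖ / ‖catalanD d n * z ^ n‖
        = catRatio d n * |z| := by
      intro n
      have hC : (0 : ℝ) < catalanD d n := catalanD_pos d n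
      have hzn : |z| ^ n ≠ 0 := pow_ne_zero _ (abs_ne_zero.mpr hz)
      rw [Real.norm_eq_abs, Real.norm_eq_abs, abs_mul, abs_mul, abs_pow, abs_pow,
        catalanD_succ, abs_mul, abs_of_pos hC, abs_of_pos (catRatio_pos d n), pow_succ]
      field_simp
    exact Tendsto.congr (fun n => (heq n).symm) (hratio.mul_const |z|)
  refine ⟨part1, ?_, ?_⟩
  · intro z hz
    rcases eq_or_ne z 0 with rfl | hz0
    · apply summable_of_ne_finset_zero (s := {0})
      intro n hn
      simp only [Finset.mem_singleton] at hn
      simp [zero_pow hn]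
    · refine summable_of_ratio_test_tendsto_lt_one ?_ ?_ (hnorm z hz0)
      · calc (d : ℝ) ^ d * |z| < (d : ℝ) ^ d * ((d : ℝ) ^ d)⁻¹ := by
              exact mul_lt_mul_of_pos_left hz hddpos
          _ = 1 := mul_inv_cancel₀ hddpos.ne'
      · exact Eventually.of_forall fun n =>
          mul_ne_zero (catalanD_pos d n).ne' (pow_ne_zero _ hz0)
  · intro z hz
    have hz0 : z ≠ 0 := by
      intro h
      rw [h, abs_zero] at hz
      exact absurd hz (not_lt.mpr (inv_nonneg.mpr hddpos.le))
    refine not_summable_of_ratio_test_tendsto_gt_one ?_ (hnorm z hz0)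
    calc (1 : ℝ) = (d : ℝ) ^ d * ((d : ℝ) ^ d)⁻¹ := (mul_inv_cancel₀ hddpos.ne').symm
      _ < (d : ℝ) ^ d * |z| := mul_lt_mul_of_pos_left hz hddpos
end

section
/- For every integer d ≥ 2, the sequence C_d(n) · n^{(d²-1)/2} / d^{dn} converges, as n → ∞, to the positive constant (2π)^{(1-d)/2} · d^{1/2} · ∏_{k=0}^{d-1} k!. In particular C_d(n) is asymptotic to (2π)^{(1-d)/2} d^{1/2} (∏_{k=0}^{d-1} k!) · n^{-(d²-1)/2} · d^{dn}. -/
open Finset Filter Topology Real Stirling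

lemma stirling_pos {k : ℕ} (hk : 1 ≤ k) : 0 < stirlingSeq k := by
  cases k with
  | zero => omega
  | succ k => exact stirlingSeq'_pos k

lemma fact_eq {k : ℕ} (hk : 1 ≤ k) :
    (k.factorial : ℝ) = stirlingSeq k * (Real.sqrt (2 * k) * ((k : ℝ) / exp 1) ^ k) := by
  have hk0 : (0 : ℝ) < k := by exact_mod_cast hk
  have h : Real.sqrt (2 * k) * ((k : ℝ) / exp 1) ^ k ≠ 0 := by positivity
  rw [stirlingSeq, div_mul_cancel₀ _ h]

lemma perp (n p : ℕ) (hn : 1 ≤ n) :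
    Real.sqrt (2 * ((n + p : ℕ) : ℝ)) * (((n + p : ℕ) : ℝ) / exp 1) ^ (n + p)
    = Real.sqrt 2 * Real.sqrt n * ((n / exp 1 : ℝ) ^ n) * ((n : ℝ) ^ p / (exp 1) ^ p) *
      ((1 + (p : ℝ) / n) ^ (n + p) * Real.sqrt (1 + (p : ℝ) / n)) := by
  have hn0 : (0 : ℝ) < n := by exact_mod_cast hn
  have h1 : ((n + p : ℕ) : ℝ) = (n : ℝ) * (1 + (p : ℝ) / n) := by
    push_cast; field_simp
  rw [h1]
  rw [show (2 : ℝ) * ((n : ℝ) * (1 + (p:ℝ)/n)) = (2 * n) * (1 + (p:ℝ)/n) by ring]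
  rw [Real.sqrt_mul (by positivity : (0:ℝ) ≤ 2*(n:ℝ)), Real.sqrt_mul (by norm_num : (0:ℝ) ≤ 2)]
  rw [show (n : ℝ) * (1 + (p:ℝ)/n) / exp 1 = (n / exp 1) * (1 + (p:ℝ)/n) by ring]
  rw [mul_pow, pow_add ((n:ℝ)/exp 1) n p, div_pow]
  ring

lemma key_eq (d n : ℕ) (hd : 1 ≤ d) (hn : 1 ≤ n) :
    catalanD d n * (n : ℝ) ^ (((d : ℝ) ^ 2 - 1) / 2) / (d : ℝ) ^ (d * n)
    = (∏ p ∈ Finset.range d, (p.factorial : ℝ)) *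
      (stirlingSeq (d * n) / ∏ p ∈ Finset.range d, stirlingSeq (n + p)) *
      (Real.sqrt (2 * d) / (Real.sqrt 2) ^ d) *
      ∏ p ∈ Finset.range d,
        ((exp 1) ^ p / ((1 + (p : ℝ) / n) ^ (n + p) * Real.sqrt (1 + (p : ℝ) / n))) := by
  have hn0 : (0 : ℝ) < n := by exact_mod_cast hn
  have hd0 : (0 : ℝ) < d := by exact_mod_cast hd
  set m : ℕ := ∑ p ∈ Finset.range d, p with hm
  -- rewrite factorials and split products
  unfold catalanD
  rw [Finset.prod_div_distrib]
  rw [fact_eq (show 1 ≤ d * n from Nat.one_le_iff_ne_zero.mpr (by positivity))]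
  rw [Finset.prod_congr rfl (fun p _ => fact_eq (show 1 ≤ n + p by omega))]
  rw [Finset.prod_mul_distrib]
  -- product of the G-parts
  have hGP : ∏ p ∈ Finset.range d,
      (Real.sqrt (2 * ((n + p : ℕ) : ℝ)) * (((n + p : ℕ) : ℝ) / exp 1) ^ (n + p))
      = (Real.sqrt 2) ^ d * (Real.sqrt n) ^ d * ((n / exp 1 : ℝ) ^ n) ^ d *
        ((n : ℝ) ^ m / (exp 1) ^ m) *
        (∏ p ∈ Finset.range d, ((1 + (p : ℝ) / n) ^ (n + p) * Real.sqrt (1 + (p : ℝ) / n))) := by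
    rw [Finset.prod_congr rfl (fun p _ => perp n p hn)]
    simp only [Finset.prod_mul_distrib, Finset.prod_div_distrib, Finset.prod_const,
      Finset.card_range]
    rw [Finset.prod_pow_eq_pow_sum (Finset.range d) (fun x => x) ((n:ℝ)),
      Finset.prod_pow_eq_pow_sum (Finset.range d) (fun x => x) (exp 1), ← hm]
  -- the (dn)!-part
  have hGdn : Real.sqrt (2 * ((d * n : ℕ) : ℝ)) * (((d * n : ℕ) : ℝ) / exp 1) ^ (d * n)
      = Real.sqrt (2 * d) * Real.sqrt n * (d : ℝ) ^ (d * n) * ((n / exp 1 : ℝ) ^ n) ^ d := by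
    push_cast
    rw [show (2 : ℝ) * ((d:ℝ) * n) = (2 * d) * n by ring,
      Real.sqrt_mul (by positivity : (0:ℝ) ≤ 2 * (d:ℝ))]
    rw [show (d:ℝ) * n / exp 1 = (d:ℝ) * ((n:ℝ) / exp 1) by ring, mul_pow]
    rw [mul_comm d n, pow_mul]
    ring
  rw [hGP, hGdn]
  -- the rpow part
  have hα : (n : ℝ) ^ (((d : ℝ) ^ 2 - 1) / 2)
      = (Real.sqrt n) ^ d * (n : ℝ) ^ m / Real.sqrt n := by
    have hmr : (m : ℝ) * 2 = (d : ℝ) * ((d : ℝ) - 1) := by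
      have := Finset.sum_range_id_mul_two d
      have : (m : ℝ) * 2 = ((d * (d-1) : ℕ) : ℝ) := by exact_mod_cast congrArg (Nat.cast (R := ℝ)) this
      rw [this]
      push_cast [Nat.cast_sub hd]
      ring
    rw [Real.sqrt_eq_rpow, ← Real.rpow_natCast ((n:ℝ) ^ ((1:ℝ)/2)) d,
      ← Real.rpow_mul hn0.le, ← Real.rpow_natCast (n:ℝ) m,
      ← Real.rpow_add hn0, ← Real.rpow_sub hn0]
    congr 1
    linear_combination (-(1:ℝ)/2) * hmr
  rw [hα]
  -- RHS last product
  rw [Finset.prod_div_distrib, Finset.prod_pow_eq_pow_sum]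
  -- now pure field algebra
  have hSp : (∏ p ∈ Finset.range d, stirlingSeq (n + p)) ≠ 0 :=
    Finset.prod_ne_zero_iff.mpr fun p _ => (stirling_pos (show 1 ≤ n + p by omega)).ne'
  have hQ : (∏ p ∈ Finset.range d, ((1 + (p : ℝ) / n) ^ (n + p) * Real.sqrt (1 + (p : ℝ) / n))) ≠ 0 :=
    Finset.prod_ne_zero_iff.mpr fun p _ => by positivity
  have h2 : Real.sqrt 2 ≠ 0 := by positivity
  have hS : Real.sqrt n ≠ 0 := by positivity
  have hEN : ((n : ℝ) / exp 1) ^ n ≠ 0 := by positivity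
  have hNm : (n : ℝ) ^ m ≠ 0 := by positivity
  have hEm : (exp 1 : ℝ) ^ m ≠ 0 := by positivity
  have hD : (d : ℝ) ^ (d * n) ≠ 0 := by positivity
  rw [← hm]
  set P1 := ∏ p ∈ Finset.range d, (p.factorial : ℝ)
  set Sdn := stirlingSeq (d * n)
  set Sp := ∏ p ∈ Finset.range d, stirlingSeq (n + p)
  set Q := ∏ p ∈ Finset.range d, ((1 + (p : ℝ) / n) ^ (n + p) * Real.sqrt (1 + (p : ℝ) / n))
  set A := Real.sqrt (2 * (d : ℝ))
  set s2 := Real.sqrt 2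
  set sn := Real.sqrt (n : ℝ)
  set EN := ((n : ℝ) / exp 1) ^ n
  set Nm := (n : ℝ) ^ m
  set Em := (exp 1 : ℝ) ^ m
  set D := (d : ℝ) ^ (d * n)
  field_simp


-- limit of each per-p factor
lemma perp_tendsto (p : ℕ) :
    Tendsto (fun n : ℕ => (exp 1) ^ p / ((1 + (p : ℝ) / n) ^ (n + p) * Real.sqrt (1 + (p : ℝ) / n)))
      atTop (𝓝 1) := by
  have hb : Tendsto (fun n : ℕ => 1 + (p : ℝ) / n) atTop (𝓝 1) := by
    simpa using tendsto_const_nhds.add (tendsto_const_div_atTop_nhds_zero_nat (p : ℝ))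
  have h1 : Tendsto (fun n : ℕ => (1 + (p : ℝ) / n) ^ (n + p)) atTop (𝓝 (exp p)) := by
    have := (Real.tendsto_one_add_div_pow_exp (p : ℝ)).mul (hb.pow p)
    simpa [pow_add] using this
  have h2 : Tendsto (fun n : ℕ => Real.sqrt (1 + (p : ℝ) / n)) atTop (𝓝 1) := by
    have := (Real.continuous_sqrt.tendsto 1).comp hb
    simpa [Function.comp_def] using this
  have h3 : Tendsto (fun n : ℕ => (exp 1 : ℝ) ^ p / ((1 + (p : ℝ) / n) ^ (n + p) * Real.sqrt (1 + (p : ℝ) / n)))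
      atTop (𝓝 ((exp 1) ^ p / (exp p * 1))) :=
    tendsto_const_nhds.div (h1.mul h2) (by positivity)
  simpa [← Real.exp_nat_mul, mul_comm] using h3


lemma const_eq (d : ℕ) :
    Real.sqrt π / (Real.sqrt π) ^ d * (Real.sqrt (2 * d) / (Real.sqrt 2) ^ d)
      = (2 * π) ^ ((1 - (d : ℝ)) / 2) * (d : ℝ) ^ ((1 : ℝ) / 2) := by
  have hπ : (0 : ℝ) < 2 * π := by positivity
  rw [Real.sqrt_mul (by norm_num : (0:ℝ) ≤ 2) (d : ℝ)]
  have h1 : Real.sqrt π / (Real.sqrt π) ^ d * (Real.sqrt 2 * Real.sqrt d / (Real.sqrt 2) ^ d)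
      = (Real.sqrt (2 * π) / (Real.sqrt (2 * π)) ^ d) * Real.sqrt d := by
    rw [Real.sqrt_mul (by norm_num : (0:ℝ) ≤ 2) π, mul_pow]
    have h2 : (Real.sqrt 2) ^ d ≠ 0 := by positivity
    have h3 : (Real.sqrt π) ^ d ≠ 0 := by positivity
    field_simp
  rw [h1]
  rw [Real.sqrt_eq_rpow (2 * π), ← Real.rpow_natCast ((2*π) ^ ((1:ℝ)/2)) d,
    ← Real.rpow_mul hπ.le, ← Real.rpow_sub hπ, Real.sqrt_eq_rpow (d:ℝ)]
  ring_nf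

/-- `C_d(n) ~ (2π)^{(1-d)/2} d^{1/2} (∏_{k<d} k!) · n^{-(d²-1)/2} · d^{dn}` as `n → ∞`. -/
theorem catalanD_asymptotics (d : ℕ) (hd : 2 ≤ d) :
    Filter.Tendsto
      (fun n : ℕ => catalanD d n * (n : ℝ) ^ (((d : ℝ) ^ 2 - 1) / 2) / (d : ℝ) ^ (d * n))
      Filter.atTop
      (𝓝 ((2 * Real.pi) ^ ((1 - (d : ℝ)) / 2) * (d : ℝ) ^ ((1 : ℝ) / 2) *
        ∏ k ∈ Finset.range d, (k.factorial : ℝ))) := by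
  have hd1 : 1 ≤ d := by omega
  -- limit of the Stirling factors
  have hdn : Tendsto (fun n : ℕ => d * n) atTop atTop :=
    tendsto_atTop_mono (fun n => Nat.le_mul_of_pos_left n (by omega)) tendsto_id
  have h1 : Tendsto (fun n : ℕ => stirlingSeq (d * n)) atTop (𝓝 (Real.sqrt π)) :=
    tendsto_stirlingSeq_sqrt_pi.comp hdn
  have h2 : Tendsto (fun n : ℕ => ∏ p ∈ Finset.range d, stirlingSeq (n + p)) atTop
      (𝓝 ((Real.sqrt π) ^ d)) := by
    have := tendsto_finset_prod (f := fun (p : ℕ) (n : ℕ) => stirlingSeq (n + p))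
      (a := fun _ => Real.sqrt π) (Finset.range d)
      (fun p _ => tendsto_stirlingSeq_sqrt_pi.comp (tendsto_add_atTop_nat p))
    simpa using this
  have hπd : ((Real.sqrt π) ^ d : ℝ) ≠ 0 := by positivity
  have h3 : Tendsto (fun n : ℕ => ∏ p ∈ Finset.range d,
      ((exp 1) ^ p / ((1 + (p : ℝ) / n) ^ (n + p) * Real.sqrt (1 + (p : ℝ) / n)))) atTop
      (𝓝 1) := by
    have := tendsto_finset_prod
      (f := fun (p : ℕ) (n : ℕ) => (exp 1 : ℝ) ^ p / ((1 + (p : ℝ) / n) ^ (n + p) * Real.sqrt (1 + (p : ℝ) / n)))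
      (a := fun _ => (1 : ℝ)) (Finset.range d) (fun p _ => perp_tendsto p)
    simpa using this
  have hg : Tendsto (fun n : ℕ =>
      (∏ p ∈ Finset.range d, (p.factorial : ℝ)) *
      (stirlingSeq (d * n) / ∏ p ∈ Finset.range d, stirlingSeq (n + p)) *
      (Real.sqrt (2 * d) / (Real.sqrt 2) ^ d) *
      ∏ p ∈ Finset.range d,
        ((exp 1) ^ p / ((1 + (p : ℝ) / n) ^ (n + p) * Real.sqrt (1 + (p : ℝ) / n)))) atTop
      (𝓝 ((∏ p ∈ Finset.range d, (p.factorial : ℝ)) *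
        (Real.sqrt π / (Real.sqrt π) ^ d) * (Real.sqrt (2 * d) / (Real.sqrt 2) ^ d) * 1)) :=
    ((tendsto_const_nhds.mul (h1.div h2 hπd)).mul tendsto_const_nhds).mul h3
  have hval : (∏ p ∈ Finset.range d, (p.factorial : ℝ)) *
        (Real.sqrt π / (Real.sqrt π) ^ d) * (Real.sqrt (2 * d) / (Real.sqrt 2) ^ d) * 1
      = (2 * Real.pi) ^ ((1 - (d : ℝ)) / 2) * (d : ℝ) ^ ((1 : ℝ) / 2) *
        ∏ k ∈ Finset.range d, (k.factorial : ℝ) := by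
    rw [mul_one, mul_assoc, const_eq d]
    ring
  rw [← hval]
  refine hg.congr' ?_
  filter_upwards [eventually_ge_atTop 1] with n hn
  exact (key_eq d n hd1 hn).symm
end

section
/- For every natural number n, ∫_0^4 x^n · (1/(2π)) · √((4 - x)/x) dx = C(n), where C(n) = (2n)!/(n!(n+1)!) is the n-th Catalan number; i.e., the Catalan numbers are the power moments of the Marchenko–Pastur density W₂(x) = (1/(2π))√((4-x)/x) on [0, 4]. -/
open Real

lemma gamma_nat_add_half (n : ℕ) :
    Real.Gamma (n + 1 / 2) = Real.sqrt Real.pi * (2 * n).factorial / (4 ^ n * n.factorial) := by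
  induction n with
  | zero => simpa using Real.Gamma_one_half_eq
  | succ n ih =>
      have h : ((n : ℝ) + 1) + 1 / 2 = (n + 1 / 2) + 1 := by ring
      rw [Nat.cast_succ, h, Real.Gamma_add_one (by positivity), ih]
      have h2 : (2 * (n + 1)).factorial = (2 * n + 2) * ((2 * n + 1) * (2 * n).factorial) := by
        have : 2 * (n + 1) = (2 * n + 1) + 1 := by ring
        rw [this, Nat.factorial_succ, Nat.factorial_succ]
      rw [h2, Nat.factorial_succ]
      push_cast
      have h4 : (4 : ℝ) ^ (n + 1) = 4 * 4 ^ n := by ring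
      rw [h4]
      have hp : (4 : ℝ) ^ n ≠ 0 := by positivity
      have hf : ((n.factorial : ℝ)) ≠ 0 := by exact_mod_cast Nat.factorial_ne_zero _
      field_simp
      ring

lemma exp_ne (n : ℕ) : ((n : ℝ) - 1 / 2) ≠ 0 := by
  rcases n with _ | m
  · norm_num
  · have : (0:ℝ) ≤ m := Nat.cast_nonneg m
    push_cast
    intro h
    linarith

lemma beta_real (n : ℕ) :
    ∫ t in (0:ℝ)..1, t ^ ((n : ℝ) - 1 / 2) * (1 - t) ^ ((1 : ℝ) / 2) =
      Real.Gamma (n + 1 / 2) * Real.Gamma (3 / 2) / (n + 1).factorial := by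
  have hu : (0 : ℝ) < ((n : ℂ) + 1 / 2).re := by
    simp [Complex.add_re]
    positivity
  have hv : (0 : ℝ) < ((3 : ℂ) / 2).re := by norm_num [Complex.div_re]
  have hB := Complex.Gamma_mul_Gamma_eq_betaIntegral hu hv
  have hsum : (n : ℂ) + 1 / 2 + 3 / 2 = (((n + 1 : ℕ)) : ℂ) + 1 := by push_cast; ring
  have hG2 : Complex.Gamma ((n : ℂ) + 1 / 2 + 3 / 2) = (((n + 1).factorial : ℕ) : ℂ) := by
    rw [hsum, Complex.Gamma_nat_eq_factorial]
  have key : Complex.betaIntegral ((n : ℂ) + 1 / 2) (3 / 2) =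
      ((∫ t in (0:ℝ)..1, t ^ ((n : ℝ) - 1 / 2) * (1 - t) ^ ((1 : ℝ) / 2) : ℝ) : ℂ) := by
    have congr1 : Complex.betaIntegral ((n : ℂ) + 1 / 2) (3 / 2) =
        ∫ t in (0:ℝ)..1, ((t ^ ((n : ℝ) - 1 / 2) * (1 - t) ^ ((1 : ℝ) / 2) : ℝ) : ℂ) := by
      rw [Complex.betaIntegral]
      apply intervalIntegral.integral_congr
      intro x hx
      rw [Set.uIcc_of_le (by norm_num)] at hx
      obtain ⟨hx0, hx1⟩ := hx
      have e1 : (n : ℂ) + 1 / 2 - 1 = (((n : ℝ) - 1 / 2 : ℝ) : ℂ) := by push_cast; ring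
      have e2 : (3 : ℂ) / 2 - 1 = (((1 : ℝ) / 2 : ℝ) : ℂ) := by push_cast; ring
      simp only []
      rw [e1, e2, ← Complex.ofReal_cpow hx0, ← Complex.ofReal_one, ← Complex.ofReal_sub,
        ← Complex.ofReal_cpow (by linarith), ← Complex.ofReal_mul]
    rw [congr1]
    exact RCLike.intervalIntegral_ofReal
  rw [key, hG2] at hB
  have hGu : Complex.Gamma ((n : ℂ) + 1 / 2) = ((Real.Gamma ((n : ℝ) + 1 / 2) : ℝ) : ℂ) := by
    rw [← Complex.Gamma_ofReal]; push_cast; ring_nf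
  have hGv : Complex.Gamma ((3 : ℂ) / 2) = ((Real.Gamma ((3 : ℝ) / 2) : ℝ) : ℂ) := by
    rw [← Complex.Gamma_ofReal]; norm_num
  rw [hGu, hGv] at hB
  have hr : Real.Gamma ((n : ℝ) + 1 / 2) * Real.Gamma (3 / 2) =
      ((n + 1).factorial : ℝ) *
        ∫ t in (0:ℝ)..1, t ^ ((n : ℝ) - 1 / 2) * (1 - t) ^ ((1 : ℝ) / 2) := by
    exact_mod_cast hB
  have hf : (((n + 1).factorial : ℕ) : ℝ) ≠ 0 := by exact_mod_cast Nat.factorial_ne_zero _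
  rw [hr]
  field_simp

/-- The Catalan numbers are the power moments on `[0, 4]` of the Marchenko–Pastur density
`W₂(x) = (1/(2π)) √((4-x)/x)`. -/
theorem catalan_moments_marchenko_pastur (n : ℕ) :
    ∫ x in (0 : ℝ)..4, x ^ n * (1 / (2 * Real.pi)) * Real.sqrt ((4 - x) / x) =
      ((2 * n).factorial : ℝ) / ((n.factorial : ℝ) * ((n + 1).factorial : ℝ)) := by
  have step1 : (∫ x in (0 : ℝ)..4, x ^ n * (1 / (2 * Real.pi)) * Real.sqrt ((4 - x) / x)) =
      ∫ x in (0 : ℝ)..4, (1 / (2 * Real.pi)) * (x ^ ((n : ℝ) - 1 / 2) * (4 - x) ^ ((1 : ℝ) / 2)) := by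
    apply intervalIntegral.integral_congr
    intro x hx
    rw [Set.uIcc_of_le (by norm_num)] at hx
    obtain ⟨hx0, hx4⟩ := hx
    simp only []
    rcases eq_or_lt_of_le hx0 with h0 | h0
    · subst h0
      rw [div_zero, Real.sqrt_zero, mul_zero, Real.zero_rpow (exp_ne n), zero_mul, mul_zero]
    · have hx4' : (0:ℝ) ≤ 4 - x := by linarith
      rw [Real.sqrt_eq_rpow, Real.div_rpow hx4' h0.le, Real.rpow_sub h0, Real.rpow_natCast]
      ring
  rw [step1, intervalIntegral.integral_const_mul]
  have step2 : (∫ x in (0 : ℝ)..4, x ^ ((n : ℝ) - 1 / 2) * (4 - x) ^ ((1 : ℝ) / 2)) =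
      4 * (4 : ℝ) ^ n * ∫ t in (0:ℝ)..1, t ^ ((n : ℝ) - 1 / 2) * (1 - t) ^ ((1 : ℝ) / 2) := by
    have hsub := intervalIntegral.smul_integral_comp_mul_left
      (fun x : ℝ => x ^ ((n : ℝ) - 1 / 2) * (4 - x) ^ ((1 : ℝ) / 2)) (a := 0) (b := 1) 4
    simp only [mul_zero, mul_one] at hsub
    rw [← hsub, smul_eq_mul]
    have hc : (∫ x in (0:ℝ)..1,
        (fun x : ℝ => x ^ ((n : ℝ) - 1 / 2) * (4 - x) ^ ((1 : ℝ) / 2)) (4 * x)) =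
        ∫ t in (0:ℝ)..1, (4:ℝ) ^ n * (t ^ ((n : ℝ) - 1 / 2) * (1 - t) ^ ((1 : ℝ) / 2)) := by
      apply intervalIntegral.integral_congr
      intro t ht
      rw [Set.uIcc_of_le (by norm_num)] at ht
      obtain ⟨ht0, ht1⟩ := ht
      simp only []
      have h1 : (4 * t) ^ ((n : ℝ) - 1 / 2) = 4 ^ ((n : ℝ) - 1 / 2) * t ^ ((n : ℝ) - 1 / 2) :=
        Real.mul_rpow (by norm_num) ht0
      have h2 : (4 - 4 * t) ^ ((1 : ℝ) / 2) = 4 ^ ((1 : ℝ) / 2) * (1 - t) ^ ((1 : ℝ) / 2) := by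
        rw [show (4 : ℝ) - 4 * t = 4 * (1 - t) by ring,
          Real.mul_rpow (by norm_num) (by linarith)]
      have h3 : (4 : ℝ) ^ ((n : ℝ) - 1 / 2) * 4 ^ ((1 : ℝ) / 2) = 4 ^ (n : ℝ) := by
        rw [← Real.rpow_add (by norm_num)]
        norm_num
      have h4 : (4 : ℝ) ^ ((n : ℝ)) = 4 ^ n := Real.rpow_natCast 4 n
      rw [h1, h2, ← h4, ← h3]
      ring
    rw [hc, intervalIntegral.integral_const_mul]
    ring
  rw [step2, beta_real, gamma_nat_add_half]
  have hG32 : Real.Gamma (3 / 2) = Real.sqrt Real.pi / 2 := by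
    have := gamma_nat_add_half 1
    norm_num at this
    linarith [this]
  rw [hG32]
  have hpi : Real.sqrt Real.pi * Real.sqrt Real.pi = Real.pi :=
    Real.mul_self_sqrt Real.pi_pos.le
  have hpne : Real.pi ≠ 0 := Real.pi_ne_zero
  have h4n : (4 : ℝ) ^ n ≠ 0 := by positivity
  have hf1 : ((n.factorial : ℝ)) ≠ 0 := by exact_mod_cast Nat.factorial_ne_zero _
  have hf2 : (((n + 1).factorial : ℕ) : ℝ) ≠ 0 := by exact_mod_cast Nat.factorial_ne_zero _
  field_simp
  linear_combination (4 : ℝ) * hpi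
end

section
/- For every even integer d ≥ 2 and every natural number n, the sequence D_d(n) = (∏_{r=0}^{d-1} r!/(n+r)!) · (∏_{s=0}^{d/2-1} (2n+2s)!/(2s)!) satisfies the Pochhammer identity D_d(n) = 2^{dn} · (∏_{k=1}^{d/2} (k - 1/2)_n) / (∏_{k=d/2+1}^{d} (k)_n). (Equivalently, the ordinary generating function of D_d(n) is the generalized hypergeometric series _{d/2+1}F_{d/2} with upper parameters 1/2, 3/2, …, (d-1)/2, 1, lower parameters d/2+1, d/2+2, …, d, and argument 2^d z.) -/
open Finset

/-- The generalized sequence `D_d(n)` for even `d`. -/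
noncomputable def seqD (d n : ℕ) : ℝ :=
  (∏ r ∈ Finset.range d, (r.factorial : ℝ) / ((n + r).factorial : ℝ)) *
    (∏ s ∈ Finset.range (d / 2), ((2 * n + 2 * s).factorial : ℝ) / ((2 * s).factorial : ℝ))

lemma asc_succ (a : ℝ) (n : ℕ) : ascFactorial a (n + 1) = ascFactorial a n * (a + n) :=
  Finset.prod_range_succ _ _

lemma asc_pos {a : ℝ} (ha : 0 < a) (n : ℕ) : 0 < ascFactorial a n :=
  Finset.prod_pos fun i _ => by positivity

lemma fact_eq_s9 (r n : ℕ) : ((n + r).factorial : ℝ) = (r.factorial : ℝ) * ascFactorial ((r : ℝ) + 1) n := by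
  induction n with
  | zero => simp [ascFactorial]
  | succ n ih =>
    have : n + 1 + r = (n + r) + 1 := by ring
    rw [this, Nat.factorial_succ, asc_succ]
    push_cast [ih]
    ring

lemma asc_double (s n : ℕ) :
    ascFactorial (2 * (s : ℝ) + 1) (2 * n) =
      4 ^ n * ascFactorial ((s : ℝ) + 1 / 2) n * ascFactorial ((s : ℝ) + 1) n := by
  induction n with
  | zero => simp [ascFactorial]
  | succ n ih =>
    have h2 : 2 * (n + 1) = (2 * n + 1) + 1 := by ring
    rw [h2, asc_succ, asc_succ, asc_succ, asc_succ, ih]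
    push_cast
    ring

theorem seqD_pochhammer (d : ℕ) (hd : 2 ≤ d) (hdeven : Even d) (n : ℕ) :
    seqD d n =
      (2 : ℝ) ^ (d * n) * (∏ k ∈ Finset.Icc 1 (d / 2), ascFactorial ((k : ℝ) - 1 / 2) n) /
        (∏ k ∈ Finset.Icc (d / 2 + 1) d, ascFactorial (k : ℝ) n) := by
  obtain ⟨m, hm⟩ := hdeven
  subst hm
  have hm2 : (m + m) / 2 = m := by omega
  rw [hm2]
  set P1 := ∏ k ∈ Finset.range m, ascFactorial ((k : ℝ) + 1) n with hP1
  set P2 := ∏ k ∈ Finset.range m, ascFactorial ((m : ℝ) + (k : ℝ) + 1) n with hP2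
  set Q := ∏ k ∈ Finset.range m, ascFactorial ((k : ℝ) + 1 / 2) n with hQ
  have hP1pos : 0 < P1 := Finset.prod_pos fun i _ => asc_pos (by positivity) n
  have hP2pos : 0 < P2 := Finset.prod_pos fun i _ => asc_pos (by positivity) n
  -- LHS first product
  have hA : (∏ r ∈ Finset.range (m + m), (r.factorial : ℝ) / ((n + r).factorial : ℝ)) =
      1 / (P1 * P2) := by
    have : ∀ r ∈ Finset.range (m + m), (r.factorial : ℝ) / ((n + r).factorial : ℝ) =
        (ascFactorial ((r : ℝ) + 1) n)⁻¹ := by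
      intro r _
      rw [fact_eq_s9, div_mul_eq_div_div, div_self (by positivity), one_div]
    rw [Finset.prod_congr rfl this, Finset.prod_inv_distrib, Finset.prod_range_add, ← one_div]
    congr 2
    exact Finset.prod_congr rfl fun i _ => by congr 1; push_cast; ring
  -- LHS second product
  have hB : (∏ s ∈ Finset.range m, ((2 * n + 2 * s).factorial : ℝ) / ((2 * s).factorial : ℝ)) =
      (4 : ℝ) ^ (n * m) * Q * P1 := by
    have : ∀ s ∈ Finset.range m, ((2 * n + 2 * s).factorial : ℝ) / ((2 * s).factorial : ℝ) =
        4 ^ n * ascFactorial ((s : ℝ) + 1 / 2) n * ascFactorial ((s : ℝ) + 1) n := by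
      intro s _
      have := fact_eq_s9 (2 * s) (2 * n)
      rw [this, mul_comm ((2*s).factorial : ℝ), mul_div_assoc, div_self (by positivity), mul_one]
      have harg : ((2 * s : ℕ) : ℝ) + 1 = 2 * (s : ℝ) + 1 := by push_cast; ring
      rw [harg, asc_double]
    rw [Finset.prod_congr rfl this, Finset.prod_mul_distrib, Finset.prod_mul_distrib,
      Finset.prod_const, ← pow_mul, Finset.card_range]
  -- RHS products
  have hC : (∏ k ∈ Finset.Icc 1 m, ascFactorial ((k : ℝ) - 1 / 2) n) = Q := by
    rw [← Finset.Ico_add_one_right_eq_Icc, Finset.prod_Ico_eq_prod_range]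
    refine Finset.prod_congr (by simp) fun i _ => ?_
    have h : ((1 + i : ℕ) : ℝ) - 1 / 2 = (i : ℝ) + 1 / 2 := by push_cast; ring
    rw [h]
  have hD : (∏ k ∈ Finset.Icc (m + 1) (m + m), ascFactorial ((k : ℝ)) n) = P2 := by
    rw [← Finset.Ico_add_one_right_eq_Icc, Finset.prod_Ico_eq_prod_range]
    refine Finset.prod_congr (by simp) fun i _ => ?_
    have h : ((m + 1 + i : ℕ) : ℝ) = (m : ℝ) + (i : ℝ) + 1 := by push_cast; ring
    rw [h]
  rw [seqD, hm2, hA, hB, hC, hD]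
  have h2 : (2 : ℝ) ^ ((m + m) * n) = 4 ^ (n * m) := by
    rw [show (m + m) * n = 2 * (n * m) by ring, pow_mul]
    norm_num
  rw [h2]
  field_simp
end

section
/- For every even integer d ≥ 2, the sequence n ↦ (D_d(n))^{1/n} converges to 2^d as n → ∞. -/
open Finset Filter Topology

private lemma sum_range_two_mul {f : ℕ → ℝ} (m : ℕ) :
    ∑ r ∈ Finset.range (2 * m), f r = ∑ s ∈ Finset.range m, (f (2 * s) + f (2 * s + 1)) := by
  induction m with
  | zero => simp
  | succ m ih =>
    rw [Nat.mul_succ, Finset.sum_range_succ, Finset.sum_range_succ, Finset.sum_range_succ, ih]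
    ring

private lemma aux_log_ratio (a b : ℝ) :
    Filter.Tendsto (fun n : ℕ => Real.log (2 * n + a) - Real.log ((n : ℝ) + b)) Filter.atTop
      (𝓝 (Real.log 2)) := by
  have hn : Filter.Tendsto (fun n : ℕ => (n : ℝ) + b) Filter.atTop Filter.atTop :=
    tendsto_atTop_add_const_right _ b tendsto_natCast_atTop_atTop
  have hinv : Filter.Tendsto (fun n : ℕ => ((n : ℝ) + b)⁻¹) Filter.atTop (𝓝 0) :=
    hn.inv_tendsto_atTop
  have hratio : Filter.Tendsto (fun n : ℕ => (2 * n + a) / ((n : ℝ) + b)) Filter.atTop (𝓝 2) := by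
    have h1 : Filter.Tendsto (fun n : ℕ => 2 + (a - 2 * b) * ((n : ℝ) + b)⁻¹) Filter.atTop
        (𝓝 (2 + (a - 2 * b) * 0)) := tendsto_const_nhds.add (tendsto_const_nhds.mul hinv)
    rw [mul_zero, add_zero] at h1
    apply h1.congr'
    have hev : ∀ᶠ n : ℕ in Filter.atTop, (0 : ℝ) < (n : ℝ) + b := hn.eventually_gt_atTop 0
    filter_upwards [hev] with n hnb
    field_simp
    ring
  have hcont : Filter.Tendsto (fun n : ℕ => Real.log ((2 * n + a) / ((n : ℝ) + b)))
      Filter.atTop (𝓝 (Real.log 2)) :=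
    ((Real.continuousAt_log (by norm_num)).tendsto.comp hratio)
  apply hcont.congr'
  have hev1 : ∀ᶠ n : ℕ in Filter.atTop, (0 : ℝ) < (n : ℝ) + b := hn.eventually_gt_atTop 0
  have hn2 : Filter.Tendsto (fun n : ℕ => 2 * (n : ℝ) + a) Filter.atTop Filter.atTop :=
    tendsto_atTop_add_const_right _ a (tendsto_natCast_atTop_atTop.const_mul_atTop two_pos)
  filter_upwards [hev1, hn2.eventually_gt_atTop 0] with n h1 h2
  rw [Real.log_div h2.ne' h1.ne']

/-- `(D_d(n))^{1/n} → 2^d` as `n → ∞`. -/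
theorem seqD_root_limit (d : ℕ) (hd : 2 ≤ d) (hdeven : Even d) :
    Filter.Tendsto (fun n : ℕ => (seqD d n) ^ ((1 : ℝ) / n)) Filter.atTop
      (𝓝 ((2 : ℝ) ^ (d : ℕ))) := by
  obtain ⟨m, hm⟩ := hdeven
  have hd2 : d = 2 * m := by omega
  have hdiv : d / 2 = m := by omega
  -- positivity of seqD
  have hpos : ∀ n, 0 < seqD d n := by
    intro n
    unfold seqD
    apply mul_pos <;> apply Finset.prod_pos <;> intro i _ <;>
      exact div_pos (by positivity) (by positivity)
  -- explicit formula for log seqD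
  have hlog : ∀ n : ℕ, Real.log (seqD d n) =
      (∑ r ∈ Finset.range d, (Real.log (r.factorial : ℝ) - Real.log (((n + r).factorial : ℝ))))
      + ∑ s ∈ Finset.range (d / 2),
          (Real.log (((2 * n + 2 * s).factorial : ℝ)) - Real.log (((2 * s).factorial : ℝ))) := by
    intro n
    unfold seqD
    rw [Real.log_mul, Real.log_prod, Real.log_prod]
    · congr 1 <;> apply Finset.sum_congr rfl <;> intro i _ <;>
        rw [Real.log_div (by positivity) (by positivity)]
    · intro i _
      positivity
    · intro i _
      positivity
    · apply ne_of_gt; apply Finset.prod_pos; intro i _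
      exact div_pos (by positivity) (by positivity)
    · apply ne_of_gt; apply Finset.prod_pos; intro i _
      exact div_pos (by positivity) (by positivity)
  -- log of successor factorial
  have hfact : ∀ k : ℕ, Real.log (((k + 1).factorial : ℝ)) =
      Real.log ((k : ℝ) + 1) + Real.log ((k.factorial : ℝ)) := by
    intro k
    rw [Nat.factorial_succ]
    push_cast
    rw [Real.log_mul (by positivity) (by positivity)]
  -- the difference of consecutive logs
  set g : ℕ → ℝ := fun n => Real.log (seqD d (n + 1)) - Real.log (seqD d n) with hg
  have hgformula : ∀ n : ℕ, g n =
      ∑ s ∈ Finset.range m,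
        ((Real.log (2 * (n : ℝ) + (2 * s + 1)) - Real.log ((n : ℝ) + (2 * s + 1)))
          + (Real.log (2 * (n : ℝ) + (2 * s + 2)) - Real.log ((n : ℝ) + (2 * s + 2)))) := by
    intro n
    have e1 : g n = (∑ r ∈ Finset.range d, (- Real.log ((n : ℝ) + r + 1)))
        + ∑ s ∈ Finset.range m,
          (Real.log (2 * (n : ℝ) + 2 * s + 1) + Real.log (2 * (n : ℝ) + 2 * s + 2)) := by
      rw [hg]
      simp only [hlog, hdiv]
      rw [add_sub_add_comm, ← Finset.sum_sub_distrib, ← Finset.sum_sub_distrib]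
      congr 1
      · apply Finset.sum_congr rfl
        intro r _
        have h1 : n + 1 + r = (n + r) + 1 := by omega
        rw [h1, hfact]
        push_cast
        ring
      · apply Finset.sum_congr rfl
        intro s _
        have h1 : 2 * (n + 1) + 2 * s = ((2 * n + 2 * s) + 1) + 1 := by omega
        rw [h1, hfact, hfact]
        push_cast
        ring
    rw [e1, hd2, sum_range_two_mul, ← Finset.sum_add_distrib]
    apply Finset.sum_congr rfl
    intro s _
    push_cast
    ring
  -- limit of g
  have hglim : Filter.Tendsto g Filter.atTop (𝓝 ((d : ℝ) * Real.log 2)) := by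
    have hsum : Filter.Tendsto (fun n : ℕ =>
        ∑ s ∈ Finset.range m,
          ((Real.log (2 * (n : ℝ) + (2 * s + 1)) - Real.log ((n : ℝ) + (2 * s + 1)))
            + (Real.log (2 * (n : ℝ) + (2 * s + 2)) - Real.log ((n : ℝ) + (2 * s + 2)))))
        Filter.atTop (𝓝 (∑ s ∈ Finset.range m, (Real.log 2 + Real.log 2))) := by
      apply tendsto_finset_sum
      intro s _
      exact (aux_log_ratio (2 * s + 1) (2 * s + 1)).add (aux_log_ratio (2 * s + 2) (2 * s + 2))
    have heq : (∑ _s ∈ Finset.range m, (Real.log 2 + Real.log 2)) = (d : ℝ) * Real.log 2 := by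
      rw [Finset.sum_const, Finset.card_range, hd2]
      push_cast
      ring
    rw [heq] at hsum
    exact hsum.congr (fun n => (hgformula n).symm)
  -- Cesàro
  have hD0 : seqD d 0 = 1 := by
    unfold seqD
    simp only [Nat.zero_add, Finset.prod_div_distrib, mul_zero, zero_add]
    rw [div_self (by positivity), div_self (by positivity), mul_one]
  have htel : ∀ n : ℕ, ∑ i ∈ Finset.range n, g i = Real.log (seqD d n) := by
    intro n
    rw [hg]
    rw [Finset.sum_range_sub (fun k => Real.log (seqD d k)), hD0, Real.log_one, sub_zero]
  have hces : Filter.Tendsto (fun n : ℕ => ((n : ℝ)⁻¹) * Real.log (seqD d n)) Filter.atTop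
      (𝓝 ((d : ℝ) * Real.log 2)) := by
    have := hglim.cesaro
    apply this.congr
    intro n
    rw [htel]
  -- conclude via exp
  have hexp : Filter.Tendsto (fun n : ℕ => Real.exp ((n : ℝ)⁻¹ * Real.log (seqD d n)))
      Filter.atTop (𝓝 (Real.exp ((d : ℝ) * Real.log 2))) :=
    (Real.continuous_exp.tendsto _).comp hces
  have hval : Real.exp ((d : ℝ) * Real.log 2) = (2 : ℝ) ^ (d : ℕ) := by
    rw [Real.exp_nat_mul, Real.exp_log (by norm_num)]
  rw [← hval]
  apply hexp.congr
  intro n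
  rw [Real.rpow_def_of_pos (hpos n)]
  congr 1
  rw [one_div]
  ring
end

section
/- For every real z with 0 < z < 1/16, the series ∑_{n=0}^{∞} D₄(n) z^n converges and equals (1 + 6z)/(4z²) + ((1 - 16z)(1 + 112z))/(240π z³) · K(4√z) - (1 + 224z + 256z²)/(240π z³) · E(4√z), where K and E are the complete elliptic integrals of the first and second kind. -/
open Real

/-- The sequence `D₄(n) = 6(2n)!(2n+2)!/(n!(n+1)!(n+2)!(n+3)!)`. -/
noncomputable def seqD4 (n : ℕ) : ℝ :=
  6 * ((2 * n).factorial : ℝ) * ((2 * n + 2).factorial : ℝ) /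
    ((n.factorial : ℝ) * ((n + 1).factorial : ℝ) * ((n + 2).factorial : ℝ) *
      ((n + 3).factorial : ℝ))

/-- Complete elliptic integral of the first kind. -/
noncomputable def ellipticK (k : ℝ) : ℝ :=
  ∫ θ in (0 : ℝ)..(Real.pi / 2), (1 - k ^ 2 * Real.sin θ ^ 2) ^ (-(1 : ℝ) / 2)

/-- Complete elliptic integral of the second kind. -/
noncomputable def ellipticE (k : ℝ) : ℝ :=
  ∫ θ in (0 : ℝ)..(Real.pi / 2), (1 - k ^ 2 * Real.sin θ ^ 2) ^ ((1 : ℝ) / 2)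

open Filter intervalIntegral Topology MeasureTheory

noncomputable def aW (n : ℕ) : ℝ := (Nat.centralBinom n : ℝ) / 4 ^ n

lemma aW_zero : aW 0 = 1 := by simp [aW, Nat.centralBinom_zero]

lemma aW_pos (n : ℕ) : 0 < aW n :=
  div_pos (by exact_mod_cast Nat.centralBinom_pos n) (by positivity)

lemma aW_succ (n : ℕ) : aW (n + 1) = (2 * n + 1) / (2 * n + 2) * aW n := by
  have h' : ((n:ℝ) + 1) * (Nat.centralBinom (n+1) : ℝ) = 2 * (2 * n + 1) * Nat.centralBinom n := by
    exact_mod_cast Nat.succ_mul_centralBinom_succ n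
  have hn : ((n:ℝ) + 1) ≠ 0 := by positivity
  unfold aW
  rw [pow_succ]
  have h2 : (2*(n:ℝ)+2) ≠ 0 := by positivity
  have h4 : (4:ℝ)^n ≠ 0 := by positivity
  field_simp
  linear_combination 2 * h'

lemma aW_le_one (n : ℕ) : aW n ≤ 1 := by
  induction n with
  | zero => simp [aW_zero]
  | succ k ih =>
    rw [aW_succ]
    have h1 : (2*(k:ℝ)+1)/(2*k+2) ≤ 1 := by
      rw [div_le_one (by positivity)]; linarith
    calc (2*(k:ℝ)+1)/(2*k+2) * aW k ≤ 1 * aW k := by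
          exact mul_le_mul_of_nonneg_right h1 (aW_pos k).le
      _ ≤ 1 := by simpa using ih

lemma wallis (n : ℕ) : ∫ θ in (0:ℝ)..(π/2), sin θ ^ (2*n) = π/2 * aW n := by
  induction n with
  | zero => simp [aW_zero]
  | succ k ih =>
    have h := integral_sin_pow (a := 0) (b := π/2) (2*k)
    have h2 : 2 * (k+1) = 2*k + 2 := by ring
    rw [h2, h, ih, aW_succ]
    simp only [Real.cos_pi_div_two, Real.sin_pi_div_two, Real.sin_zero, Real.cos_zero]
    push_cast
    ring

lemma cont_inv_sub (u : ℝ) (h0 : 0 ≤ u) (h1 : u < 1) :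
    Continuous fun θ : ℝ => (1 - u * sin θ ^ 2)⁻¹ := by
  apply Continuous.inv₀ (by continuity)
  intro θ
  have hs : u * sin θ ^ 2 ≤ u := by
    nlinarith [sin_sq_le_one θ]
  nlinarith

lemma integral_inv_one_sub_mul_sin_sq {u : ℝ} (h0 : 0 ≤ u) (h1 : u < 1) :
    ∫ θ in (0:ℝ)..(π/2), (1 - u * sin θ ^ 2)⁻¹ = π / (2 * Real.sqrt (1 - u)) := by
  set s := Real.sqrt (1 - u) with hs_def
  have hspos : 0 < s := Real.sqrt_pos.mpr (by linarith)
  have hs2 : s ^ 2 = 1 - u := Real.sq_sqrt (by linarith)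
  set f : ℝ → ℝ := fun θ => (1 - u * sin θ ^ 2)⁻¹ with hf_def
  have hfc : Continuous f := cont_inv_sub u h0 h1
  set F : ℝ → ℝ := fun θ => arctan (s * tan θ) / s with hF_def
  have hderiv : ∀ θ ∈ Set.Ico (0:ℝ) (π/2), HasDerivAt F (f θ) θ := by
    intro θ hθ
    have hcos : 0 < cos θ := Real.cos_pos_of_mem_Ioo ⟨by linarith [hθ.1, pi_pos], hθ.2⟩
    have htan : HasDerivAt tan (1 / cos θ ^ 2) θ := Real.hasDerivAt_tan hcos.ne'
    have h2 : HasDerivAt (fun x => s * tan x) (s * (1 / cos θ ^ 2)) θ := htan.const_mul s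
    have h3 : HasDerivAt arctan (1 / (1 + (s * tan θ) ^ 2)) (s * tan θ) :=
      Real.hasDerivAt_arctan (s * tan θ)
    have h4 := (h3.comp θ h2)
    have h5 := h4.div_const s
    convert h5 using 1
    · rfl
    · rfl
    · rfl
    have hcos2 : cos θ ^ 2 ≠ 0 := by positivity
    have htan_eq : tan θ = sin θ / cos θ := Real.tan_eq_sin_div_cos θ
    have hpyth : sin θ ^ 2 + cos θ ^ 2 = 1 := Real.sin_sq_add_cos_sq θ
    have hne : 1 - u * sin θ ^ 2 ≠ 0 := by
      nlinarith [sin_sq_le_one θ]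
    have hden : cos θ ^ 2 + s ^ 2 * sin θ ^ 2 = 1 - u * sin θ ^ 2 := by
      rw [hs2]; linear_combination hpyth
    have hden' : cos θ ^ 2 + s ^ 2 * sin θ ^ 2 ≠ 0 := hden ▸ hne
    show (1 - u * sin θ ^ 2)⁻¹ = _
    rw [← hden, htan_eq]
    field_simp
  have hint : ∀ a b : ℝ, IntervalIntegrable f MeasureTheory.volume a b :=
    fun a b => hfc.intervalIntegrable a b
  -- partial integral equals F b for b in [0, π/2)
  have hpartial : ∀ b ∈ Set.Ico (0:ℝ) (π/2), ∫ θ in (0:ℝ)..b, f θ = F b := by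
    intro b hb
    have : ∫ θ in (0:ℝ)..b, f θ = F b - F 0 := by
      apply integral_eq_sub_of_hasDerivAt
      · intro x hx
        apply hderiv
        rcases hx with ⟨hx1, hx2⟩
        constructor
        · simpa [inf_eq_left.mpr hb.1] using hx1
        · have : x ≤ b := by simpa [sup_eq_right.mpr hb.1] using hx2
          linarith [hb.2]
      · exact hint 0 b
    simpa [hF_def, Real.tan_zero, Real.arctan_zero] using this
  -- continuity of the primitive
  have hcontprim : Continuous fun b => ∫ θ in (0:ℝ)..b, f θ :=
    intervalIntegral.continuous_primitive hint 0
  have hne : (𝓝[<] (π/2)).NeBot := nhdsLT_neBot (π/2)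
  have hlim1 : Tendsto (fun b => ∫ θ in (0:ℝ)..b, f θ) (𝓝[<] (π/2))
      (𝓝 (∫ θ in (0:ℝ)..(π/2), f θ)) :=
    (hcontprim.tendsto (π/2)).mono_left nhdsWithin_le_nhds
  have hlim2 : Tendsto F (𝓝[<] (π/2)) (𝓝 (π / (2 * s))) := by
    have h1 : Tendsto (fun b => s * tan b) (𝓝[<] (π/2)) atTop :=
      (Real.tendsto_tan_pi_div_two).const_mul_atTop hspos
    have h2 : Tendsto (fun b => arctan (s * tan b)) (𝓝[<] (π/2)) (𝓝 (π/2)) :=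
      (tendsto_nhds_of_tendsto_nhdsWithin Real.tendsto_arctan_atTop).comp h1
    have h3 := h2.div_const s
    convert h3 using 2
    ring
  have heq : (fun b => ∫ θ in (0:ℝ)..b, f θ) =ᶠ[𝓝[<] (π/2)] F := by
    filter_upwards [Ioo_mem_nhdsLT (by positivity : (0:ℝ) < π/2)] with b hb
    exact hpartial b ⟨hb.1.le, hb.2⟩
  have := tendsto_nhds_unique (hlim1.congr' heq) hlim2
  rw [this]

lemma hasSum_swap (c : ℕ → ℝ) (hc : ∀ n, |c n| ≤ 1) {v : ℝ} (h0 : 0 ≤ v) (h1 : v < 1)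
    (g : ℝ → ℝ)
    (hg : ∀ θ : ℝ, HasSum (fun n => c n * v ^ n * sin θ ^ (2 * n)) (g θ)) :
    HasSum (fun n => c n * v ^ n * (π / 2 * aW n)) (∫ θ in (0:ℝ)..(π/2), g θ) := by
  set μ : Measure ℝ := volume.restrict (Set.Ioc (0:ℝ) (π/2)) with hμ
  set F : ℕ → ℝ → ℝ := fun n θ => c n * v ^ n * sin θ ^ (2 * n) with hF
  have hFc : ∀ n, Continuous (F n) := fun n => by fun_prop
  have hFint : ∀ n, Integrable (F n) μ := fun n => (hFc n).integrableOn_Ioc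
  have hnormval : ∀ n, ∫ θ, ‖F n θ‖ ∂μ = |c n| * v ^ n * (π / 2 * aW n) := by
    intro n
    have : ∀ θ, ‖F n θ‖ = |c n| * v ^ n * sin θ ^ (2 * n) := by
      intro θ
      have h2 : (0:ℝ) ≤ sin θ ^ (2 * n) := by
        rw [pow_mul]; positivity
      rw [hF]
      simp only [norm_mul, Real.norm_eq_abs, abs_mul]
      rw [abs_of_nonneg (pow_nonneg h0 n), abs_of_nonneg h2]
    simp_rw [this]
    have := wallis n
    rw [intervalIntegral.integral_of_le (by positivity : (0:ℝ) ≤ π/2)] at this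
    calc ∫ θ, |c n| * v ^ n * sin θ ^ (2*n) ∂μ
        = |c n| * v ^ n * ∫ θ, sin θ ^ (2*n) ∂μ := by
          rw [MeasureTheory.integral_const_mul]
      _ = |c n| * v ^ n * (π/2 * aW n) := by rw [this]
  have hsummable : Summable fun n => ∫ θ, ‖F n θ‖ ∂μ := by
    refine Summable.of_nonneg_of_le (f := fun n => π/2 * v ^ n) (fun n => ?_) (fun n => ?_)
      ((summable_geometric_of_lt_one h0 h1).mul_left (π/2))
    · positivity
    · 
      rw [hnormval n]
      have hv : (0:ℝ) ≤ v ^ n := pow_nonneg h0 n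
      calc |c n| * v ^ n * (π/2 * aW n) ≤ 1 * v ^ n * (π/2 * 1) := by
            have hb1 : |c n| * v ^ n ≤ 1 * v ^ n := mul_le_mul_of_nonneg_right (hc n) hv
            have hb2 : π/2 * aW n ≤ π/2 * 1 := mul_le_mul_of_nonneg_left (aW_le_one n) (by positivity)
            exact mul_le_mul hb1 hb2 (mul_nonneg (by positivity) (aW_pos n).le) (by positivity)
        _ = π/2 * v ^ n := by ring
  have happ := MeasureTheory.hasSum_integral_of_summable_integral_norm hFint hsummable
  have heq1 : ∀ n, ∫ θ, F n θ ∂μ = c n * v ^ n * (π / 2 * aW n) := by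
    intro n
    have := wallis n
    rw [intervalIntegral.integral_of_le (by positivity : (0:ℝ) ≤ π/2)] at this
    calc ∫ θ, F n θ ∂μ = c n * v ^ n * ∫ θ, sin θ ^ (2*n) ∂μ := by
          rw [hF]; exact MeasureTheory.integral_const_mul _ _
      _ = c n * v ^ n * (π/2 * aW n) := by rw [this]
  have heq2 : ∫ θ, (∑' n, F n θ) ∂μ = ∫ θ in (0:ℝ)..(π/2), g θ := by
    rw [intervalIntegral.integral_of_le (by positivity : (0:ℝ) ≤ π/2)]
    apply MeasureTheory.integral_congr_ae
    filter_upwards with θ using (hg θ).tsum_eq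
  rw [funext heq1, heq2] at happ
  exact happ

lemma hasSum_geom_sin {v : ℝ} (h0 : 0 ≤ v) (h1 : v < 1) (θ : ℝ) :
    HasSum (fun n => v ^ n * sin θ ^ (2 * n)) ((1 - v * sin θ ^ 2)⁻¹) := by
  have hr0 : (0:ℝ) ≤ v * sin θ ^ 2 := by positivity
  have hr1 : v * sin θ ^ 2 < 1 := by nlinarith [sin_sq_le_one θ]
  have h := hasSum_geometric_of_lt_one hr0 hr1
  convert h using 2 with n
  rw [mul_pow, pow_mul]

lemma hasSum_invsqrt {v : ℝ} (h0 : 0 ≤ v) (h1 : v < 1) :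
    HasSum (fun n => aW n * v ^ n) (Real.sqrt (1 - v))⁻¹ := by
  have hπ : (0:ℝ) < π := pi_pos
  have h := hasSum_swap (fun _ => 1) (fun n => by norm_num) h0 h1
      (fun θ => (1 - v * sin θ ^ 2)⁻¹)
      (fun θ => by simpa using hasSum_geom_sin h0 h1 θ)
  rw [integral_inv_one_sub_mul_sin_sq h0 h1] at h
  have h2 := h.mul_left (2/π)
  have hs : 0 < Real.sqrt (1 - v) := Real.sqrt_pos.mpr (by linarith)
  have hval : 2/π * (π/(2*Real.sqrt (1-v))) = (Real.sqrt (1-v))⁻¹ := by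
    field_simp
  rw [hval] at h2
  convert h2 using 1
  · rfl
  funext n
  field_simp

/-- shift a sum right by one, prepending a zero -/
lemma hasSum_shift_one {f : ℕ → ℝ} {s : ℝ} (h : HasSum f s) :
    HasSum (fun n => Nat.rec 0 (fun m _ => f m) n : ℕ → ℝ) s := by
  have hinj : Function.Injective (fun n : ℕ => n + 1) := fun a b hab => by simpa using hab
  have h0 : ∀ x ∉ Set.range (fun n : ℕ => n + 1),
      (fun n => (Nat.rec 0 (fun m _ => f m) n : ℝ)) x = 0 := by
    intro x hx
    match x with
    | 0 => rfl
    | m + 1 => exact absurd ⟨m, rfl⟩ hx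
  exact (Function.Injective.hasSum_iff hinj h0).mp h

lemma hasSum_sqrt {v : ℝ} (h0 : 0 ≤ v) (h1 : v < 1) :
    HasSum (fun n => aW n / (1 - 2 * (n:ℝ)) * v ^ n) (Real.sqrt (1 - v)) := by
  have h := hasSum_invsqrt h0 h1
  have h2 := (h.mul_left (-v))
  have h3 := hasSum_shift_one h2
  have h4 := h.add h3
  have hs : 0 < Real.sqrt (1 - v) := Real.sqrt_pos.mpr (by linarith)
  have hval : (Real.sqrt (1 - v))⁻¹ + -v * (Real.sqrt (1 - v))⁻¹ = Real.sqrt (1 - v) := by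
    calc (Real.sqrt (1 - v))⁻¹ + -v * (Real.sqrt (1 - v))⁻¹ = (1-v) / Real.sqrt (1-v) := by ring
      _ = Real.sqrt (1 - v) := Real.div_sqrt
  rw [hval] at h4
  convert h4 using 1
  funext n
  match n with
  | 0 => simp [aW_zero]
  | m + 1 =>
    show aW (m+1) / (1 - 2 * (((m+1) : ℕ) :ℝ)) * v ^ (m+1)
        = aW (m+1) * v ^ (m+1) + -v * (aW m * v ^ m)
    rw [aW_succ m]
    push_cast
    have hm1 : (2*(m:ℝ)+2) ≠ 0 := by positivity
    have hm2 : (1 - 2*((m:ℝ)+1)) ≠ 0 := by intro hc; nlinarith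
    have hv : v ^ (m+1) = v * v ^ m := pow_succ' v m
    rw [hv]
    field_simp
    ring

section
variable {z : ℝ} (hz0 : 0 < z) (hz1 : z < 1/16)

lemma aux_u (θ : ℝ) (hz0 : 0 < z) (hz1 : z < 1/16) :
    0 ≤ 16 * z * sin θ ^ 2 ∧ 16 * z * sin θ ^ 2 < 1 ∧ 0 < 1 - 16 * z * sin θ ^ 2 := by
  have h1 : (0:ℝ) ≤ 16 * z * sin θ ^ 2 := by positivity
  have h2 : 16 * z * sin θ ^ 2 < 1 := by nlinarith [sin_sq_le_one θ]
  exact ⟨h1, h2, by linarith⟩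

lemma ksq (hz0 : 0 < z) : (4 * Real.sqrt z) ^ 2 = 16 * z := by
  rw [mul_pow, Real.sq_sqrt hz0.le]; norm_num

lemma hasSum_K (hz0 : 0 < z) (hz1 : z < 1/16) :
    HasSum (fun n => ((Nat.centralBinom n : ℝ))^2 * z ^ n)
      (2/π * ellipticK (4 * Real.sqrt z)) := by
  have hv0 : (0:ℝ) ≤ 16 * z := by linarith
  have hv1 : 16 * z < 1 := by linarith
  have hg : ∀ θ : ℝ, HasSum (fun n => aW n * (16*z) ^ n * sin θ ^ (2 * n))
      ((1 - (4 * Real.sqrt z) ^ 2 * sin θ ^ 2) ^ (-(1 : ℝ) / 2)) := by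
    intro θ
    obtain ⟨h1, h2, h3⟩ := aux_u θ hz0 hz1
    have h := hasSum_invsqrt h1 h2
    have hrw : (1 - (4 * Real.sqrt z) ^ 2 * sin θ ^ 2) ^ (-(1 : ℝ) / 2)
        = (Real.sqrt (1 - 16 * z * sin θ ^ 2))⁻¹ := by
      rw [ksq hz0]
      rw [show (-(1:ℝ)/2) = -(1/2) by ring, Real.rpow_neg (by linarith),
        ← Real.sqrt_eq_rpow]
    rw [hrw]
    convert h using 2 with n
    rw [pow_mul]; ring
  have h := hasSum_swap (fun n => aW n) (fun n => by
      rw [abs_of_nonneg (aW_pos n).le]; exact aW_le_one n) hv0 hv1 _ hg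
  have h2 := h.mul_left (2/π)
  have hπ : (0:ℝ) < π := pi_pos
  convert h2 using 1
  · rfl
  funext n
  have h16 : ((16:ℝ)) ^ n = (4 ^ n) ^ 2 := by
    rw [sq, ← mul_pow]; norm_num
  have h4 : ((4:ℝ)) ^ n ≠ 0 := by positivity
  have key : aW n ^ 2 * 16 ^ n = ((Nat.centralBinom n : ℝ))^2 := by
    rw [aW, div_pow, h16, div_mul_cancel₀]
    positivity
  rw [mul_pow]
  calc ((Nat.centralBinom n : ℝ))^2 * z ^ n = 2/π * (π/2 * ((aW n ^2 * 16^n) * z^n)) := by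
        rw [key]; field_simp
    _ = 2 / π * (aW n * (16 ^ n * z ^ n) * (π / 2 * aW n)) := by ring
  rfl

lemma hasSum_E (hz0 : 0 < z) (hz1 : z < 1/16) :
    HasSum (fun n => ((Nat.centralBinom n : ℝ))^2 / (1 - 2*(n:ℝ)) * z ^ n)
      (2/π * ellipticE (4 * Real.sqrt z)) := by
  have hv0 : (0:ℝ) ≤ 16 * z := by linarith
  have hv1 : 16 * z < 1 := by linarith
  have hg : ∀ θ : ℝ, HasSum (fun n => (aW n / (1 - 2*(n:ℝ))) * (16*z) ^ n * sin θ ^ (2 * n))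
      ((1 - (4 * Real.sqrt z) ^ 2 * sin θ ^ 2) ^ ((1 : ℝ) / 2)) := by
    intro θ
    obtain ⟨h1, h2, h3⟩ := aux_u θ hz0 hz1
    have h := hasSum_sqrt h1 h2
    have hrw : (1 - (4 * Real.sqrt z) ^ 2 * sin θ ^ 2) ^ ((1 : ℝ) / 2)
        = Real.sqrt (1 - 16 * z * sin θ ^ 2) := by
      rw [ksq hz0, ← Real.sqrt_eq_rpow]
    rw [hrw]
    convert h using 2 with n
    rw [pow_mul]; ring
  have hd : ∀ n : ℕ, |1 - 2*(n:ℝ)| ≥ 1 := by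
    intro n
    rcases Nat.eq_zero_or_pos n with h | h
    · simp [h]
    · have : (1:ℝ) ≤ n := by exact_mod_cast h
      rw [abs_of_nonpos (by linarith)]
      linarith
  have hc : ∀ n : ℕ, |aW n / (1 - 2*(n:ℝ))| ≤ 1 := by
    intro n
    rw [abs_div]
    have h1 := hd n
    have h2 : |aW n| ≤ 1 := by rw [abs_of_nonneg (aW_pos n).le]; exact aW_le_one n
    rw [div_le_one (by linarith)]
    linarith
  have h := hasSum_swap _ hc hv0 hv1 _ hg
  have h2 := h.mul_left (2/π)
  have hπ : (0:ℝ) < π := pi_pos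
  convert h2 using 1
  · rfl
  funext n
  have h16 : ((16:ℝ)) ^ n = (4 ^ n) ^ 2 := by
    rw [sq, ← mul_pow]; norm_num
  have h4 : ((4:ℝ)) ^ n ≠ 0 := by positivity
  have key : aW n ^ 2 * 16 ^ n = ((Nat.centralBinom n : ℝ))^2 := by
    rw [aW, div_pow, h16, div_mul_cancel₀]
    positivity
  have hdn : (1 - 2*(n:ℝ)) ≠ 0 := by
    have := hd n; intro hc'; rw [hc'] at this; simp at this; linarith
  rw [mul_pow]
  calc ((Nat.centralBinom n : ℝ))^2 / (1 - 2*(n:ℝ)) * z ^ n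
      = 2/π * (π/2 * ((aW n ^2 * 16^n) / (1 - 2*(n:ℝ)) * z^n)) := by
        rw [key]; field_simp
    _ = 2 / π * (aW n / (1 - 2*(n:ℝ)) * (16 ^ n * z ^ n) * (π / 2 * aW n)) := by ring
  rfl
end

lemma two_mul_factorial_eq (n : ℕ) :
    ((2*n).factorial : ℝ) = (Nat.centralBinom n : ℝ) * (n.factorial : ℝ) * (n.factorial : ℝ) := by
  have h := Nat.choose_mul_factorial_mul_factorial (show n ≤ 2*n by omega)
  have h2 : 2*n - n = n := by omega
  rw [h2] at h
  rw [Nat.centralBinom]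
  exact_mod_cast h.symm

lemma seqD4_eq (n : ℕ) : seqD4 n =
    12 * (2*(n:ℝ)+1) * ((Nat.centralBinom n : ℝ))^2 /
      (((n:ℝ)+1)^2 * ((n:ℝ)+2)^2 * ((n:ℝ)+3)) := by
  unfold seqD4
  have h1 : (2*n+2).factorial = (2*n+2) * ((2*n+1) * (2*n).factorial) := by
    rw [show 2*n+2 = (2*n+1)+1 by ring, Nat.factorial_succ, Nat.factorial_succ]
  have h2 : (n+1).factorial = (n+1) * n.factorial := Nat.factorial_succ n
  have h3 : (n+2).factorial = (n+2) * ((n+1) * n.factorial) := by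
    rw [Nat.factorial_succ, Nat.factorial_succ]
  have h4 : (n+3).factorial = (n+3) * ((n+2) * ((n+1) * n.factorial)) := by
    rw [Nat.factorial_succ, Nat.factorial_succ, Nat.factorial_succ]
  rw [h1, h2, h3, h4]
  push_cast
  rw [two_mul_factorial_eq]
  have hy : ((n.factorial : ℝ)) ≠ 0 := by
    exact_mod_cast Nat.factorial_ne_zero n
  have hn1 : ((n:ℝ)+1) ≠ 0 := by positivity
  have hn2 : ((n:ℝ)+2) ≠ 0 := by positivity
  have hn3 : ((n:ℝ)+3) ≠ 0 := by positivity
  field_simp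
  ring

lemma cb_succ (n : ℕ) : (Nat.centralBinom (n+1) : ℝ) * ((n:ℝ)+1) =
    2 * (2*(n:ℝ)+1) * (Nat.centralBinom n : ℝ) := by
  have h := Nat.succ_mul_centralBinom_succ n
  have h' : (((n+1) * Nat.centralBinom (n+1) : ℕ) : ℝ)
      = ((2 * (2*n+1) * Nat.centralBinom n : ℕ) : ℝ) := by exact_mod_cast h
  push_cast at h'
  linear_combination h'

lemma keyCoeff (n : ℕ) :
    ((Nat.centralBinom (n+3) : ℝ))^2 * (1 + 1/(2*(n:ℝ)+5))
      + ((Nat.centralBinom (n+2) : ℝ))^2 * (96 + 224/(2*(n:ℝ)+3))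
      + ((Nat.centralBinom (n+1) : ℝ))^2 * (-1792 + 256/(2*(n:ℝ)+1))
    = 480 * seqD4 n := by
  rw [seqD4_eq]
  have r1 := cb_succ n
  have r2 := cb_succ (n+1)
  have r3 := cb_succ (n+2)
  push_cast at r2 r3
  have hn1 : ((n:ℝ)+1) ≠ 0 := by positivity
  have hn2 : ((n:ℝ)+2) ≠ 0 := by positivity
  have hn3 : ((n:ℝ)+3) ≠ 0 := by positivity
  have ho1 : (2*(n:ℝ)+1) ≠ 0 := by positivity
  have ho3 : (2*(n:ℝ)+3) ≠ 0 := by positivity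
  have ho5 : (2*(n:ℝ)+5) ≠ 0 := by positivity
  have e1 : (Nat.centralBinom (n+1) : ℝ) = 2 * (2*(n:ℝ)+1) * (Nat.centralBinom n : ℝ) / ((n:ℝ)+1) := by
    field_simp
    linarith [r1]
  have e2 : (Nat.centralBinom (n+2) : ℝ) = 2 * (2*(n:ℝ)+3) * (Nat.centralBinom (n+1) : ℝ) / ((n:ℝ)+2) := by
    field_simp
    nlinarith [r2]
  have e3 : (Nat.centralBinom (n+3) : ℝ) = 2 * (2*(n:ℝ)+5) * (Nat.centralBinom (n+2) : ℝ) / ((n:ℝ)+3) := by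
    field_simp
    nlinarith [r3]
  rw [e3, e2, e1]
  field_simp
  ring

lemma hasSum_shift (k : ℕ) {f : ℕ → ℝ} {s : ℝ} (h : HasSum f s) :
    HasSum (fun n => if k ≤ n then f (n - k) else 0) s := by
  have hinj : Function.Injective (fun n : ℕ => n + k) := fun a b hab => by simpa using hab
  have h0 : ∀ x ∉ Set.range (fun n : ℕ => n + k),
      (fun n => if k ≤ n then f (n - k) else 0) x = 0 := by
    intro x hx
    have hnk : ¬ k ≤ x := fun hle => hx ⟨x - k, by simpa using Nat.sub_add_cancel hle⟩
    simp [hnk]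
  have hcomp : ((fun n => if k ≤ n then f (n - k) else 0) ∘ (fun n : ℕ => n + k)) = f := by
    funext n; simp
  rw [← Function.Injective.hasSum_iff hinj h0, hcomp]
  exact h

/-- The ordinary generating function of `D₄(n)` in terms of complete elliptic integrals. -/
theorem seqD4_ogf (z : ℝ) (hz0 : 0 < z) (hz1 : z < 1 / 16) :
    HasSum (fun n : ℕ => seqD4 n * z ^ n)
      ((1 + 6 * z) / (4 * z ^ 2) +
        ((1 - 16 * z) * (1 + 112 * z)) / (240 * Real.pi * z ^ 3) *
          ellipticK (4 * Real.sqrt z) -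
        (1 + 224 * z + 256 * z ^ 2) / (240 * Real.pi * z ^ 3) *
          ellipticE (4 * Real.sqrt z)) := by
  have hπ : (0:ℝ) < π := pi_pos
  set B : ℕ → ℝ := fun n => ((Nat.centralBinom n : ℝ))^2 with hB
  set S : ℝ := 2/π * ellipticK (4 * Real.sqrt z) with hS
  set T : ℝ := 2/π * ellipticE (4 * Real.sqrt z) with hT
  have hK : HasSum (fun n => B n * z ^ n) S := hasSum_K hz0 hz1
  have hE : HasSum (fun n => B n / (1 - 2*(n:ℝ)) * z ^ n) T := hasSum_E hz0 hz1
  have h1 := hK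
  have h2 := hasSum_shift 1 (hK.mul_left (96*z))
  have h3 := hasSum_shift 2 (hK.mul_left (-1792*z^2))
  have h4 := hE.mul_left (-1)
  have h5 := hasSum_shift 1 (hE.mul_left (-224*z))
  have h6 := hasSum_shift 2 (hE.mul_left (-256*z^2))
  have htot := ((((h1.add h2).add h3).add h4).add h5).add h6
  set G : ℕ → ℝ := fun n =>
    B n * z ^ n + (if 1 ≤ n then 96*z*(B (n-1) * z ^ (n-1)) else 0)
      + (if 2 ≤ n then -1792*z^2*(B (n-2) * z ^ (n-2)) else 0)
      + -1*(B n / (1 - 2*(n:ℝ)) * z ^ n)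
      + (if 1 ≤ n then -224*z*(B (n-1) / (1 - 2*((n-1 : ℕ):ℝ)) * z ^ (n-1)) else 0)
      + (if 2 ≤ n then -256*z^2*(B (n-2) / (1 - 2*((n-2 : ℕ):ℝ)) * z ^ (n-2)) else 0)
    with hG
  set W : ℝ := S + 96*z*S + -1792*z^2*S + -1*T + -224*z*T + -256*z^2*T with hW
  have htot' : HasSum G W := by
    convert htot using 1
  -- shift by 3
  have hsum3 : HasSum (fun n => G (n+3)) (W - (G 0 + G 1 + G 2)) := by
    apply (hasSum_nat_add_iff 3).mpr
    convert htot' using 1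
    · rfl
    rw [Finset.sum_range_succ, Finset.sum_range_succ, Finset.sum_range_one]
    ring
  -- identify terms
  have hterm : ∀ n : ℕ, G (n+3) = 480*z^3*(seqD4 n * z^n) := by
    intro n
    have key := keyCoeff n
    have e1 : (1:ℕ) ≤ n + 3 := by omega
    have e2 : (2:ℕ) ≤ n + 3 := by omega
    have e3 : n + 3 - 1 = n + 2 := by omega
    have e4 : n + 3 - 2 = n + 1 := by omega
    rw [hG]
    simp only [e3, e4, if_pos e1, if_pos e2]
    have d1 : (1 - 2*(((n+3) : ℕ):ℝ)) = -(2*(n:ℝ)+5) := by push_cast; ring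
    have d2 : (1 - 2*(((n+2) : ℕ):ℝ)) = -(2*(n:ℝ)+3) := by push_cast; ring
    have d3 : (1 - 2*(((n+1) : ℕ):ℝ)) = -(2*(n:ℝ)+1) := by push_cast; ring
    rw [d1, d2, d3]
    have p1 : z ^ (n+3) = z^n * z^3 := by ring
    have p2 : z ^ (n+2) = z^n * z^2 := by ring
    have p3 : z ^ (n+1) = z^n * z := by ring
    rw [p1, p2, p3]
    simp only [div_neg]
    linear_combination (z^n * z^3) * key
  rw [funext hterm] at hsum3
  -- compute G 0, G 1, G 2
  have hcb0 : Nat.centralBinom 0 = 1 := Nat.centralBinom_zero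
  have hcb1 : Nat.centralBinom 1 = 2 := by decide
  have hcb2 : Nat.centralBinom 2 = 6 := by decide
  have hG0 : G 0 = 0 := by
    rw [hG]; norm_num [hB, hcb0]
  have hG1 : G 1 = -120 * z := by
    rw [hG]; norm_num [hB, hcb0, hcb1]; ring
  have hG2 : G 2 = -720 * z^2 := by
    rw [hG]; norm_num [hB, hcb0, hcb1, hcb2]; ring
  rw [hG0, hG1, hG2] at hsum3
  have hz : z ≠ 0 := ne_of_gt hz0
  have hdiv := hsum3.mul_left (1/(480*z^3))
  convert hdiv using 1
  · rfl
  · funext n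
    field_simp
  · rw [hW, hS, hT]
    field_simp
    ring
end

section
/- For every even integer d ≥ 4 there exists a function V_d : ℝ → ℝ that is continuous and strictly positive on the open interval (0, 2^d), integrable on [0, 2^d], and satisfies ∫_0^{2^d} x^n V_d(x) dx = D_d(n) for every natural number n; i.e., the Hausdorff moment problem for the sequence D_d(n) on the interval [0, 2^d] has a positive absolutely continuous solution. -/
open Finset MeasureTheory Set



noncomputable def gK (e : ℝ) (x : ℝ) : ℝ := (max (x * (2 - x)) 0) ^ e

lemma gK_nonneg (e x : ℝ) : 0 ≤ gK e x := Real.rpow_nonneg (le_max_right _ _) e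

lemma gK_cont {e : ℝ} (he : 0 < e) : Continuous (gK e) := by
  rw [continuous_iff_continuousAt]
  intro x
  exact (Real.continuousAt_rpow_const _ _ (Or.inr he.le)).comp
    (((continuous_id.mul (continuous_const.sub continuous_id)).max continuous_const).continuousAt)

lemma gK_meas {e : ℝ} (he : 0 < e) : Measurable (gK e) := (gK_cont he).measurable

lemma gK_le_one {e : ℝ} (he : 0 < e) (x : ℝ) : gK e x ≤ 1 := by
  apply Real.rpow_le_one (le_max_right _ _) _ he.le
  rw [max_le_iff]
  constructor
  · nlinarith [sq_nonneg (x - 1)]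
  · norm_num

lemma gK_zero {e : ℝ} (he : 0 < e) {x : ℝ} (hx : x ∉ Set.Ioo (0:ℝ) 2) : gK e x = 0 := by
  have hb : x * (2 - x) ≤ 0 := by
    rw [Set.mem_Ioo, not_and_or] at hx
    rcases hx with h | h
    · push_neg at h; nlinarith
    · push_neg at h; nlinarith
  rw [gK, max_eq_right hb, Real.zero_rpow he.ne']

lemma gK_pos {e : ℝ} {x : ℝ} (hx : x ∈ Set.Ioo (0:ℝ) 2) : 0 < gK e x := by
  apply Real.rpow_pos_of_pos
  rw [lt_max_iff]
  left
  nlinarith [hx.1, hx.2]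

lemma indicator_eq_self_of_zero_off {V : ℝ → ℝ} {s : Set ℝ}
    (h0 : ∀ x ∉ s, V x = 0) : s.indicator V = V := by
  funext x
  by_cases hx : x ∈ s
  · simp [Set.indicator_of_mem hx]
  · simp [Set.indicator_of_notMem hx, h0 x hx]

lemma integrable_of_zero_off {V : ℝ → ℝ} {s : Set ℝ} (hs : MeasurableSet s)
    (h0 : ∀ x ∉ s, V x = 0) (hi : IntegrableOn V s) : Integrable V := by
  rw [← indicator_eq_self_of_zero_off h0]
  exact hi.integrable_indicator hs

lemma integral_of_zero_off {V : ℝ → ℝ} {s : Set ℝ} (hs : MeasurableSet s)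
    (h0 : ∀ x ∉ s, V x = 0) : ∫ x, V x = ∫ x in s, V x := by
  rw [← MeasureTheory.integral_indicator hs, indicator_eq_self_of_zero_off h0]

lemma integral_Ioo_eq_interval {f : ℝ → ℝ} {M : ℝ} (hM : 0 ≤ M) :
    ∫ x in (0:ℝ)..M, f x = ∫ x in Set.Ioo (0:ℝ) M, f x := by
  rw [intervalIntegral.integral_of_le hM, MeasureTheory.integral_Ioc_eq_integral_Ioo]

structure IsSol (M : ℝ) (V : ℝ → ℝ) (μ : ℕ → ℝ) : Prop where
  meas : Measurable V
  cont : ContinuousOn V (Set.Ioo 0 M)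
  pos : ∀ x ∈ Set.Ioo 0 M, 0 < V x
  zero : ∀ x ∉ Set.Ioo 0 M, V x = 0
  integ : ∀ n : ℕ, Integrable (fun x => x ^ n * V x)
  mom : ∀ n : ℕ, (∫ x, x ^ n * V x) = μ n

lemma IsSol.nonneg {M V μ} (h : IsSol M V μ) (x : ℝ) : 0 ≤ V x := by
  by_cases hx : x ∈ Set.Ioo (0:ℝ) M
  · exact (h.pos x hx).le
  · rw [h.zero x hx]

noncomputable def Vbase (x : ℝ) : ℝ := Real.sqrt ((4 - x) / x)

lemma Vbase_nonneg (x : ℝ) : 0 ≤ Vbase x := Real.sqrt_nonneg _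

lemma Vbase_zero {x : ℝ} (hx : x ∉ Set.Ioo (0:ℝ) 4) : Vbase x = 0 := by
  apply Real.sqrt_eq_zero'.mpr
  rw [Set.mem_Ioo, not_and_or] at hx
  rcases hx with h | h
  · push_neg at h
    exact div_nonpos_iff.mpr (Or.inl ⟨by linarith, h⟩)
  · push_neg at h
    exact div_nonpos_iff.mpr (Or.inr ⟨by linarith, by linarith⟩)

lemma Vbase_pos {x : ℝ} (hx : x ∈ Set.Ioo (0:ℝ) 4) : 0 < Vbase x :=
  Real.sqrt_pos.mpr (div_pos (by linarith [hx.2]) hx.1)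

lemma Vbase_meas : Measurable Vbase :=
  Real.continuous_sqrt.measurable.comp ((measurable_const.sub measurable_id).div measurable_id)

lemma Vbase_cont : ContinuousOn Vbase (Set.Ioo (0:ℝ) 4) := by
  intro x hx
  exact (Real.continuous_sqrt.continuousAt.comp_continuousWithinAt
    ((continuousWithinAt_const.sub continuousWithinAt_id).div continuousWithinAt_id hx.1.ne'))

lemma Vbase_eq {x : ℝ} (hx : x ∈ Set.Ioo (0:ℝ) 4) :
    Vbase x = (4 - x) ^ (1/2 : ℝ) * x ^ (-(1/2) : ℝ) := by
  have h4 : (0:ℝ) ≤ 4 - x := by linarith [hx.2]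
  rw [Vbase, Real.sqrt_eq_rpow, Real.div_rpow h4 hx.1.le,
    Real.rpow_neg hx.1.le, div_eq_mul_inv]

lemma rpow_four_half : ((4:ℝ)) ^ (1/2 : ℝ) = 2 := by
  rw [← Real.sqrt_eq_rpow, show (4:ℝ) = 2^2 by norm_num, Real.sqrt_sq (by norm_num : (0:ℝ) ≤ 2)]

lemma Vbase_le {x : ℝ} (hx : x ∈ Set.Ioo (0:ℝ) 4) : Vbase x ≤ 2 * x ^ (-(1/2) : ℝ) := by
  rw [Vbase_eq hx]
  have h2 : (4 - x) ^ (1/2 : ℝ) ≤ 2 := by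
    have h' : (4 - x) ^ (1/2 : ℝ) ≤ (4:ℝ) ^ (1/2:ℝ) :=
      Real.rpow_le_rpow (by linarith [hx.2]) (by linarith [hx.1]) (by norm_num)
    rw [rpow_four_half] at h'
    exact h'
  exact mul_le_mul_of_nonneg_right h2 (Real.rpow_nonneg hx.1.le _)

lemma Vbase_integ (n : ℕ) : Integrable (fun x => x ^ n * Vbase x) := by
  apply integrable_of_zero_off measurableSet_Ioo
    (fun x hx => by rw [Vbase_zero hx, mul_zero])
  have hbig : IntegrableOn (fun x => 4 ^ n * (2 * x ^ (-(1/2) : ℝ))) (Set.Ioo (0:ℝ) 4) := by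
    apply Integrable.const_mul
    apply Integrable.const_mul
    have h := intervalIntegral.intervalIntegrable_rpow' (a := 0) (b := 4)
      (r := (-(1/2) : ℝ)) (by norm_num)
    rw [intervalIntegrable_iff_integrableOn_Ioo_of_le (by norm_num)] at h
    exact h
  refine Integrable.mono hbig ?_ ?_
  · exact ((measurable_id.pow_const n).mul Vbase_meas).aestronglyMeasurable
  · filter_upwards [ae_restrict_mem measurableSet_Ioo] with x hx
    rw [Real.norm_eq_abs, abs_mul, abs_pow, abs_of_pos hx.1, abs_of_nonneg (Vbase_nonneg x),
      Real.norm_eq_abs, abs_of_nonneg]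
    · calc x ^ n * Vbase x ≤ 4 ^ n * Vbase x := by
            apply mul_le_mul_of_nonneg_right _ (Vbase_nonneg x)
            exact pow_le_pow_left₀ hx.1.le hx.2.le n
        _ ≤ 4 ^ n * (2 * x ^ (-(1/2):ℝ)) := by
            apply mul_le_mul_of_nonneg_left (Vbase_le hx) (by positivity)
    · have : (0:ℝ) ≤ x ^ (-(1/2):ℝ) := Real.rpow_nonneg hx.1.le _
      positivity


lemma ae_ne_real (c : ℝ) : ∀ᵐ x : ℝ, x ≠ c := by
  rw [MeasureTheory.ae_iff]
  simp only [ne_eq, not_not, Set.setOf_eq_eq_singleton]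
  exact measure_singleton c

lemma rec_generic {L p q : ℝ} (hL : 0 < L) (hp : 0 < p) (hq : 1 < q) {W : ℝ → ℝ}
    (hWzero : ∀ x ∉ Set.Ioo (0:ℝ) L, W x = 0)
    (hWeq : ∀ x ∈ Set.Ioo (0:ℝ) L, W x = x ^ (p-1:ℝ) * (L - x) ^ (q-1:ℝ))
    (hWint : ∀ k : ℕ, Integrable (fun x => x ^ k * W x)) (n : ℕ) :
    (∫ x, x ^ (n+1) * W x) * ((n:ℝ) + p + q) = (∫ x, x ^ n * W x) * (L * ((n:ℝ) + p)) := by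
  have hq0 : (0:ℝ) < q := by linarith
  set a : ℝ := (n:ℝ) + p with ha
  have ha0 : 0 < a := by positivity
  set φ : ℝ → ℝ := fun x => x ^ a * (L - x) ^ q with hφ
  set φ' : ℝ → ℝ := fun x =>
    a * x ^ (a-1) * (L-x) ^ q + x ^ a * (-1 * q * (L-x) ^ (q-1)) with hφ'
  have hrp : ∀ (c : ℝ), 0 ≤ c → Continuous fun y : ℝ => y ^ c := fun c hc =>
    continuous_iff_continuousAt.2 fun y => Real.continuousAt_rpow_const _ _ (Or.inr hc)
  have hcφ : Continuous φ :=
    ((hrp a ha0.le)).mul (((hrp q hq0.le)).comp (continuous_const.sub continuous_id))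
  have hder : ∀ x ∈ Set.Ioo (0:ℝ) L, HasDerivAt φ (φ' x) x := by
    intro x hx
    have h1 : HasDerivAt (fun y : ℝ => y ^ a) (a * x ^ (a-1)) x :=
      Real.hasDerivAt_rpow_const (Or.inl hx.1.ne')
    have hs : HasDerivAt (fun y : ℝ => L - y) (-1) x := (hasDerivAt_id x).const_sub L
    have h2 : HasDerivAt (fun y : ℝ => (L - y) ^ q) (-1 * q * (L-x) ^ (q-1)) x :=
      hs.rpow_const (Or.inl (sub_ne_zero.mpr hx.2.ne'))
    exact h1.mul h2
  -- interval integrability of φ'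
  have hterm1 : IntervalIntegrable (fun x : ℝ => a * x ^ (a-1) * (L-x) ^ q) volume 0 L := by
    have hbound : IntervalIntegrable (fun x : ℝ => (a * L ^ (n:ℕ) * L ^ q) * x ^ (p-1:ℝ))
        volume 0 L :=
      (intervalIntegral.intervalIntegrable_rpow' (by linarith : (-1:ℝ) < p - 1)).const_mul _
    apply hbound.mono_fun
    · apply Measurable.aestronglyMeasurable
      exact (measurable_const.mul (measurable_id'.pow_const _)).mul
        ((measurable_const.sub measurable_id').pow_const _)
    · filter_upwards [ae_restrict_mem measurableSet_Ioc] with x hx'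
      rw [Set.uIoc_of_le hL.le] at hx'
      obtain ⟨hx0, hxL⟩ := hx'
      have hLx : (0:ℝ) ≤ L - x := by linarith
      have e1 : x ^ (a - 1) = x ^ (n:ℕ) * x ^ (p-1:ℝ) := by
        rw [show a - 1 = (n:ℝ) + (p-1) by rw [ha]; ring, Real.rpow_add hx0, Real.rpow_natCast]
      rw [Real.norm_eq_abs, Real.norm_eq_abs, abs_of_nonneg, abs_of_nonneg]
      · rw [e1]
        have b1 : x ^ (n:ℕ) ≤ L ^ (n:ℕ) := pow_le_pow_left₀ hx0.le hxL n
        have b2 : (L - x) ^ q ≤ L ^ q := Real.rpow_le_rpow hLx (by linarith) hq0.le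
        have c1 : (0:ℝ) ≤ x ^ (p-1:ℝ) := Real.rpow_nonneg hx0.le _
        have c2 : (0:ℝ) ≤ x ^ (n:ℕ) := pow_nonneg hx0.le n
        have c3 : (0:ℝ) ≤ (L-x) ^ q := Real.rpow_nonneg hLx _
        have c4 : (0:ℝ) ≤ L ^ (n:ℕ) := pow_nonneg hL.le n
        calc a * (x ^ (n:ℕ) * x ^ (p-1:ℝ)) * (L-x) ^ q
            = a * ((x ^ (n:ℕ) * (L-x) ^ q) * x ^ (p-1:ℝ)) := by ring
          _ ≤ a * ((L ^ (n:ℕ) * L ^ q) * x ^ (p-1:ℝ)) := by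
              apply mul_le_mul_of_nonneg_left
                (mul_le_mul_of_nonneg_right (mul_le_mul b1 b2 c3 c4) c1) ha0.le
          _ = a * L ^ (n:ℕ) * L ^ q * x ^ (p-1:ℝ) := by ring
      · positivity
      · have c1 : (0:ℝ) ≤ x ^ (a-1:ℝ) := Real.rpow_nonneg hx0.le _
        have c3 : (0:ℝ) ≤ (L-x) ^ q := Real.rpow_nonneg hLx _
        positivity
  have hterm2 : IntervalIntegrable
      (fun x : ℝ => x ^ a * (-1 * q * (L-x) ^ (q-1))) volume 0 L := by
    apply Continuous.intervalIntegrable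
    exact (hrp a ha0.le).mul (continuous_const.mul
      ((hrp (q-1) (by linarith)).comp (continuous_const.sub continuous_id)))
  have hφ'int : IntervalIntegrable φ' volume 0 L := hterm1.add hterm2
  have hFTC : ∫ x in (0:ℝ)..L, φ' x = 0 := by
    rw [intervalIntegral.integral_eq_sub_of_hasDeriv_right_of_le hL.le hcφ.continuousOn
      (fun x hx => (hder x hx).hasDerivWithinAt) hφ'int]
    have hL0 : φ L = 0 := by
      simp only [hφ, sub_self, Real.zero_rpow hq0.ne', mul_zero]
    have h00 : φ 0 = 0 := by
      simp only [hφ, Real.zero_rpow ha0.ne', zero_mul]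
    rw [hL0, h00, sub_zero]
  -- pointwise identity
  have hcongr : ∫ x in (0:ℝ)..L, φ' x
      = ∫ x in (0:ℝ)..L, ((L * a) * (x ^ n * W x) - (a + q) * (x ^ (n+1) * W x)) := by
    apply intervalIntegral.integral_congr_ae
    filter_upwards [ae_ne_real L] with x hxneL hx
    rw [Set.uIoc_of_le hL.le] at hx
    have hx' : x ∈ Set.Ioo (0:ℝ) L := ⟨hx.1, lt_of_le_of_ne hx.2 hxneL⟩
    have hx0 : (0:ℝ) < x := hx'.1
    have hxL2 : (0:ℝ) < L - x := by have := hx'.2; linarith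
    have e1 : x ^ (a - 1) = x ^ (n:ℕ) * x ^ (p-1:ℝ) := by
      rw [show a - 1 = (n:ℝ) + (p-1) by rw [ha]; ring, Real.rpow_add hx0, Real.rpow_natCast]
    have e3 : x ^ a = x ^ (n+1:ℕ) * x ^ (p-1:ℝ) := by
      rw [show a = ((n+1:ℕ):ℝ) + (p-1) by rw [ha]; push_cast; ring,
        Real.rpow_add hx0, Real.rpow_natCast]
    have e2 : (L - x) ^ q = (L - x) * (L - x) ^ (q-1:ℝ) := by
      conv_lhs => rw [show q = 1 + (q-1) by ring]
      rw [Real.rpow_add hxL2, Real.rpow_one]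
    simp only [hφ']
    rw [hWeq x hx', e1, e2, e3]
    ring
  -- integral of the linear combination
  have hsplit : ∀ k : ℕ, ∫ x in (0:ℝ)..L, x ^ k * W x = ∫ x, x ^ k * W x := by
    intro k
    rw [integral_Ioo_eq_interval hL.le]
    rw [← integral_of_zero_off measurableSet_Ioo
      (fun x hx => by rw [hWzero x hx, mul_zero])]
  have hlin : ∫ x in (0:ℝ)..L, ((L * a) * (x ^ n * W x) - (a + q) * (x ^ (n+1) * W x))
      = (L * a) * (∫ x, x ^ n * W x) - (a + q) * (∫ x, x ^ (n+1) * W x) := by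
    rw [intervalIntegral.integral_sub (((hWint n).intervalIntegrable).const_mul _)
      (((hWint (n+1)).intervalIntegrable).const_mul _),
      intervalIntegral.integral_const_mul, intervalIntegral.integral_const_mul,
      hsplit n, hsplit (n+1)]
  have h5 : (L * a) * (∫ x, x ^ n * W x) - (a + q) * (∫ x, x ^ (n+1) * W x) = 0 := by
    rw [← hlin, ← hcongr, hFTC]
  linear_combination -h5

lemma conv_step {M : ℝ} (hM : 0 < M) {V : ℝ → ℝ} {μ : ℕ → ℝ} (hsol : IsSol M V μ)
    {e : ℝ} (he : 0 < e) :
    IsSol (2*M) (fun x => ∫ t in Set.Ioo (0:ℝ) M, V t * gK e (x/t) / t)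
      (fun n => (∫ u, u ^ n * gK e u) * μ n) := by
  set g := gK e with hg
  set V' : ℝ → ℝ := fun x => ∫ t in Set.Ioo (0:ℝ) M, V t * g (x/t) / t with hV'
  have hVint : Integrable V := by simpa using hsol.integ 0
  have hfmeas : ∀ x : ℝ, Measurable (fun t : ℝ => V t * g (x/t) / t) := fun x =>
    (hsol.meas.mul ((gK_meas he).comp (measurable_const.div measurable_id))).div measurable_id
  have hfnn : ∀ x t : ℝ, t ∈ Set.Ioo (0:ℝ) M → 0 ≤ V t * g (x/t) / t := by
    intro x t ht
    exact div_nonneg (mul_nonneg (hsol.nonneg t) (gK_nonneg e _)) ht.1.le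
  -- inner integrability
  have hiint : ∀ x : ℝ, 0 < x → IntegrableOn (fun t => V t * g (x/t) / t) (Set.Ioo (0:ℝ) M) := by
    intro x hx
    refine Integrable.mono ((hVint.restrict).const_mul (2/x)) ((hfmeas x).aestronglyMeasurable) ?_
    filter_upwards [ae_restrict_mem measurableSet_Ioo] with t ht
    rw [Real.norm_eq_abs, abs_of_nonneg (hfnn x t ht), Real.norm_eq_abs]
    rcases le_or_gt 2 (x/t) with h2 | h2
    · rw [hg, gK_zero he (by simp only [Set.mem_Ioo, not_and_or]; right; push_neg; linarith)]
      have h0 : (0:ℝ) ≤ 2/x * V t := mul_nonneg (by positivity) (hsol.nonneg t)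
      simpa using h0.trans (le_abs_self _)
    · have h1t : 1/t ≤ 2/x := by
        rw [div_le_div_iff₀ ht.1 hx]
        rw [div_lt_iff₀ ht.1] at h2
        linarith
      calc V t * g (x/t) / t ≤ V t * 1 / t := by
            gcongr
            · exact ht.1.le
            · exact hsol.nonneg t
            · exact gK_le_one he _
        _ = V t * (1/t) := by ring
        _ ≤ V t * (2/x) := mul_le_mul_of_nonneg_left h1t (hsol.nonneg t)
        _ = 2/x * V t := by ring
        _ ≤ |2/x * V t| := le_abs_self _
  -- vanishing outside (0, 2M)
  have hzero : ∀ x ∉ Set.Ioo (0:ℝ) (2*M), V' x = 0 := by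
    intro x hx
    show (∫ t in Set.Ioo (0:ℝ) M, V t * g (x/t) / t) = 0
    have h0 : Set.EqOn (fun t => V t * g (x/t) / t) (fun _ => (0:ℝ)) (Set.Ioo (0:ℝ) M) := by
      intro t ht
      rw [Set.mem_Ioo, not_and_or] at hx
      have hgz : g (x/t) = 0 := by
        apply gK_zero he
        simp only [Set.mem_Ioo, not_and_or]
        rcases hx with h | h
        · push_neg at h
          left
          push_neg
          exact div_nonpos_of_nonpos_of_nonneg h ht.1.le
        · push_neg at h
          right
          push_neg
          rw [le_div_iff₀ ht.1]
          nlinarith [ht.2]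
      simp only [hgz, mul_zero, zero_div]
    rw [MeasureTheory.setIntegral_congr_fun measurableSet_Ioo h0]
    simp
  -- nonnegativity
  have hnn : ∀ x, 0 ≤ V' x := by
    intro x
    apply MeasureTheory.setIntegral_nonneg measurableSet_Ioo
    intro t ht
    exact hfnn x t ht
  -- positivity
  have hpos : ∀ x ∈ Set.Ioo (0:ℝ) (2*M), 0 < V' x := by
    intro x hx
    have hxM : x/2 < M := by linarith [hx.2]
    have hsub : Set.Ioo (x/2) M ⊆ Set.Ioo (0:ℝ) M :=
      Set.Ioo_subset_Ioo_left (by linarith [hx.1])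
    have hkey : 0 < ∫ t in (x/2)..M, V t * g (x/t) / t := by
      apply intervalIntegral.intervalIntegral_pos_of_pos_on
      · rw [intervalIntegrable_iff_integrableOn_Ioo_of_le hxM.le]
        exact ((hiint x hx.1).mono_set hsub)
      · intro t ht
        have ht' : t ∈ Set.Ioo (0:ℝ) M := hsub ht
        apply div_pos (mul_pos (hsol.pos t ht') (gK_pos _)) ht'.1
        constructor
        · exact div_pos hx.1 ht'.1
        · rw [div_lt_iff₀ ht'.1]
          linarith [ht.1]
      · exact hxM
    have heq : ∫ t in (x/2)..M, V t * g (x/t) / t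
        = ∫ t in Set.Ioo (x/2) M, V t * g (x/t) / t := by
      rw [intervalIntegral.integral_of_le hxM.le, MeasureTheory.integral_Ioc_eq_integral_Ioo]
    rw [heq] at hkey
    apply lt_of_lt_of_le hkey
    apply MeasureTheory.setIntegral_mono_set (hiint x hx.1)
    · filter_upwards [ae_restrict_mem measurableSet_Ioo] with t ht
      exact hfnn x t ht
    · exact HasSubset.Subset.eventuallyLE hsub
  -- continuity
  have hcont : ContinuousOn V' (Set.Ioo (0:ℝ) (2*M)) := by
    intro x₀ hx₀
    apply ContinuousAt.continuousWithinAt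
    apply MeasureTheory.continuousAt_of_dominated (bound := fun t => 4/x₀ * V t)
    · filter_upwards with x
      exact (hfmeas x).aestronglyMeasurable
    · have hev : ∀ᶠ x in nhds x₀, x ∈ Set.Ioo (x₀/2) (2*M + 1) := by
        apply eventually_nhds_iff.mpr
        exact ⟨Set.Ioo (x₀/2) (2*M+1), fun y hy => hy, isOpen_Ioo,
          ⟨by linarith [hx₀.1], by linarith [hx₀.2]⟩⟩
      filter_upwards [hev] with x hxev
      filter_upwards [ae_restrict_mem measurableSet_Ioo] with t ht
      rw [Real.norm_eq_abs, abs_of_nonneg (hfnn x t ht)]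
      rcases le_or_gt 2 (x/t) with h2 | h2
      · rw [hg, gK_zero he (by simp only [Set.mem_Ioo, not_and_or]; right; push_neg; linarith)]
        rw [mul_zero, zero_div]
        exact mul_nonneg (div_nonneg (by norm_num) hx₀.1.le) (hsol.nonneg t)
      · have hxpos : 0 < x := by linarith [hxev.1, hx₀.1]
        have hxt : x < 2*t := by
          rw [div_lt_iff₀ ht.1] at h2; linarith
        have h1t : 1/t ≤ 4/x₀ := by
          rw [div_le_div_iff₀ ht.1 (by linarith [hx₀.1])]
          have : x₀/2 < x := hxev.1
          linarith
        calc V t * g (x/t) / t ≤ V t * 1 / t := by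
              gcongr
              · exact ht.1.le
              · exact hsol.nonneg t
              · exact gK_le_one he _
          _ = V t * (1/t) := by ring
          _ ≤ V t * (4/x₀) := mul_le_mul_of_nonneg_left h1t (hsol.nonneg t)
          _ = 4/x₀ * V t := by ring
    · exact (hVint.restrict).const_mul _
    · filter_upwards [ae_restrict_mem measurableSet_Ioo] with t ht
      have : ContinuousAt (fun x : ℝ => x/t) x₀ := continuousAt_id.div_const t
      exact (continuousAt_const.mul ((gK_cont he).continuousAt.comp this)).div_const t
  -- measurability of V'
  have hmeas' : Measurable V' := by
    have hF : StronglyMeasurable (Function.uncurry fun (x t : ℝ) => V t * g (x/t) / t) := by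
      apply Measurable.stronglyMeasurable
      exact ((hsol.meas.comp measurable_snd).mul
        ((gK_meas he).comp (measurable_fst.div measurable_snd))).div measurable_snd
    exact (MeasureTheory.StronglyMeasurable.integral_prod_right hF).measurable
  -- the moment computation via Tonelli
  have hmomint : ∀ n : ℕ, Integrable (fun x => x ^ n * V' x) ∧
      (∫ x, x ^ n * V' x) = (∫ u, u ^ n * g u) * μ n := by
    intro n
    set ν : ℝ := ∫ u, u ^ n * g u with hν
    have hgnn : ∀ u : ℝ, 0 ≤ u ^ n * g u := by
      intro u
      rcases lt_or_ge u 0 with h | h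
      · rw [hg, gK_zero he (fun hc => absurd hc.1 (not_lt.2 h.le)), mul_zero]
      · exact mul_nonneg (pow_nonneg h n) (gK_nonneg e u)
    have hνnn : 0 ≤ ν := integral_nonneg hgnn
    have hμnn : 0 ≤ μ n := by
      rw [← hsol.mom n]
      apply integral_nonneg
      intro t
      show (0:ℝ) ≤ t ^ n * V t
      rcases lt_or_ge t 0 with h | h
      · rw [hsol.zero t (fun hc => absurd hc.1 (not_lt.2 h.le)), mul_zero]
      · exact mul_nonneg (pow_nonneg h n) (hsol.nonneg t)
    -- inner x-integral for fixed t
    have hinner : ∀ t ∈ Set.Ioo (0:ℝ) M,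
        Integrable (fun x => x ^ n * (V t * g (x/t) / t)) ∧
        (∫ x, x ^ n * (V t * g (x/t) / t)) = t ^ n * V t * ν := by
      intro t ht
      have ht0 : (0:ℝ) < t := ht.1
      have hfe : (fun x : ℝ => x ^ n * (V t * g (x/t) / t))
          = fun x => (V t / t) * (x ^ n * g (x/t)) := funext fun x => by ring
      have hzero2 : ∀ x ∉ Set.Ioo (0:ℝ) (2*t), x ^ n * g (x/t) = 0 := by
        intro x hx
        rw [Set.mem_Ioo, not_and_or] at hx
        have : g (x/t) = 0 := by
          apply gK_zero he
          simp only [Set.mem_Ioo, not_and_or]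
          rcases hx with h | h
          · push_neg at h
            left; push_neg
            exact div_nonpos_of_nonpos_of_nonneg h ht0.le
          · push_neg at h
            right; push_neg
            rw [le_div_iff₀ ht0]
            linarith
        rw [this, mul_zero]
      have hgint2 : Integrable (fun x => x ^ n * g (x/t)) := by
        apply integrable_of_zero_off measurableSet_Ioo hzero2
        have hc : IntegrableOn (fun _ : ℝ => (2*t) ^ n) (Set.Ioo (0:ℝ) (2*t)) :=
          integrableOn_const measure_Ioo_lt_top.ne
        refine Integrable.mono hc ?_ ?_
        · exact ((measurable_id.pow_const n).mul
            ((gK_meas he).comp (measurable_id.div_const t))).aestronglyMeasurable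
        · filter_upwards [ae_restrict_mem measurableSet_Ioo] with x hx
          rw [Real.norm_eq_abs, abs_of_nonneg (mul_nonneg (pow_nonneg hx.1.le n) (gK_nonneg e _)), Real.norm_eq_abs,
            abs_of_nonneg (by positivity : (0:ℝ) ≤ (2*t)^n)]
          calc x ^ n * g (x/t) ≤ x ^ n * 1 := by
                apply mul_le_mul_of_nonneg_left (gK_le_one he _) (pow_nonneg hx.1.le n)
            _ = x ^ n := mul_one _
            _ ≤ (2*t) ^ n := pow_le_pow_left₀ hx.1.le (by linarith [hx.2]) n
      have hgval : (∫ x, x ^ n * g (x/t)) = t * (t ^ n * ν) := by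
        have hcomp : (fun x : ℝ => x ^ n * g (x/t))
            = fun x => ((fun u => (t*u) ^ n * g u) (x/t)) := by
          funext x
          simp only []
          rw [show t * (x/t) = x by field_simp]
        rw [hcomp, MeasureTheory.Measure.integral_comp_div (fun u => (t*u) ^ n * g u) t]
        have : (fun u : ℝ => (t*u) ^ n * g u) = fun u => t ^ n * (u ^ n * g u) := by
          funext u; rw [mul_pow]; ring
        rw [this, MeasureTheory.integral_const_mul, smul_eq_mul, abs_of_pos ht0]
      constructor
      · rw [hfe]
        exact hgint2.const_mul _
      · rw [hfe, MeasureTheory.integral_const_mul, hgval]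
        field_simp
    -- nonnegativity of the product-integrand
    have hFnn : ∀ x t : ℝ, t ∈ Set.Ioo (0:ℝ) M → 0 ≤ x ^ n * (V t * g (x/t) / t) := by
      intro x t ht
      rcases lt_or_ge x 0 with h | h
      · have : g (x/t) = 0 := by
          apply gK_zero he
          intro hc
          exact absurd hc.1 (not_lt.2 (div_nonpos_of_nonpos_of_nonneg h.le ht.1.le))
        rw [this, mul_zero, zero_div, mul_zero]
      · exact mul_nonneg (pow_nonneg h n) (hfnn x t ht)
    set Φ : ℝ × ℝ → ENNReal :=
      fun p => ENNReal.ofReal (p.1 ^ n * (V p.2 * g (p.1/p.2) / p.2)) with hΦ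
    have hΦmeas : Measurable Φ :=
      ENNReal.measurable_ofReal.comp ((measurable_fst.pow_const n).mul
        (((hsol.meas.comp measurable_snd).mul
          ((gK_meas he).comp (measurable_fst.div measurable_snd))).div measurable_snd))
    have T_right : (∫⁻ t in Set.Ioo (0:ℝ) M, ∫⁻ x, Φ (x, t)) = ENNReal.ofReal (ν * μ n) := by
      have step1 : (∫⁻ t in Set.Ioo (0:ℝ) M, ∫⁻ x, Φ (x, t))
          = ∫⁻ t in Set.Ioo (0:ℝ) M, ENNReal.ofReal (t ^ n * V t * ν) := by
        apply MeasureTheory.setLIntegral_congr_fun measurableSet_Ioo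
        intro t ht
        beta_reduce
        rw [← ofReal_integral_eq_lintegral_ofReal (hinner t ht).1
          (Filter.Eventually.of_forall fun x => hFnn x t ht), (hinner t ht).2]
      rw [step1]
      rw [← ofReal_integral_eq_lintegral_ofReal (((hsol.integ n).restrict).mul_const ν)]
      · congr 1
        rw [MeasureTheory.integral_mul_const]
        have : ∫ t in Set.Ioo (0:ℝ) M, t ^ n * V t = μ n := by
          rw [← integral_of_zero_off measurableSet_Ioo
            (fun t htn => by rw [hsol.zero t htn, mul_zero]), hsol.mom n]
        rw [this, mul_comm]
      · filter_upwards [ae_restrict_mem measurableSet_Ioo] with t ht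
        exact mul_nonneg (mul_nonneg (pow_nonneg ht.1.le n) (hsol.nonneg t)) hνnn
    have T_left : ∀ x : ℝ, (∫⁻ t in Set.Ioo (0:ℝ) M, Φ (x, t))
        = ENNReal.ofReal (x ^ n * V' x) := by
      intro x
      rcases lt_or_ge 0 x with hx | hx
      · rw [← ofReal_integral_eq_lintegral_ofReal ((hiint x hx).const_mul (x ^ n))
          (by filter_upwards [ae_restrict_mem measurableSet_Ioo] with t ht
              exact hFnn x t ht)]
        congr 1
        rw [MeasureTheory.integral_const_mul]
      · have hVz : V' x = 0 := hzero x (fun hc => absurd hc.1 (not_lt.2 hx))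
        rw [hVz, mul_zero, ENNReal.ofReal_zero]
        have : (∫⁻ t in Set.Ioo (0:ℝ) M, Φ (x, t))
            = ∫⁻ t in Set.Ioo (0:ℝ) M, 0 := by
          apply MeasureTheory.setLIntegral_congr_fun measurableSet_Ioo
          intro t ht
          have : g (x/t) = 0 := by
            apply gK_zero he
            intro hc
            exact absurd hc.1 (not_lt.2 (div_nonpos_of_nonpos_of_nonneg hx ht.1.le))
          simp only [hΦ, this, mul_zero, zero_div, ENNReal.ofReal_zero]
        rw [this, lintegral_zero]
    have hxnn : ∀ x : ℝ, 0 ≤ x ^ n * V' x := by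
      intro x
      rcases lt_or_ge x 0 with h | h
      · rw [hzero x (fun hc => absurd hc.1 (not_lt.2 h.le)), mul_zero]
      · exact mul_nonneg (pow_nonneg h n) (hnn x)
    have hmain : (∫⁻ x, ENNReal.ofReal (x ^ n * V' x)) = ENNReal.ofReal (ν * μ n) := by
      calc (∫⁻ x, ENNReal.ofReal (x ^ n * V' x))
          = ∫⁻ x, ∫⁻ t in Set.Ioo (0:ℝ) M, Φ (x, t) := by
            apply lintegral_congr
            intro x
            rw [T_left x]
        _ = ∫⁻ p, Φ p ∂((volume : Measure ℝ).prod (volume.restrict (Set.Ioo (0:ℝ) M))) :=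
            (MeasureTheory.lintegral_prod Φ hΦmeas.aemeasurable).symm
        _ = ∫⁻ t in Set.Ioo (0:ℝ) M, ∫⁻ x, Φ (x, t) :=
            MeasureTheory.lintegral_prod_symm Φ hΦmeas.aemeasurable
        _ = ENNReal.ofReal (ν * μ n) := T_right
    have hameas : AEStronglyMeasurable (fun x => x ^ n * V' x) volume :=
      ((measurable_id.pow_const n).mul hmeas').aestronglyMeasurable
    have hint : Integrable (fun x => x ^ n * V' x) := by
      refine ⟨hameas, ?_⟩
      rw [MeasureTheory.hasFiniteIntegral_iff_ofReal (Filter.Eventually.of_forall hxnn)]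
      rw [hmain]
      exact ENNReal.ofReal_lt_top
    refine ⟨hint, ?_⟩
    rw [MeasureTheory.integral_eq_lintegral_of_nonneg_ae
      (Filter.Eventually.of_forall hxnn) hameas, hmain,
      ENNReal.toReal_ofReal (mul_nonneg hνnn hμnn)]
  constructor
  · exact hmeas'
  · exact hcont
  · exact hpos
  · exact hzero
  · exact fun n => (hmomint n).1
  · exact fun n => (hmomint n).2

-- moments of the factor density
lemma gK_eqOn {e : ℝ} (he : 0 < e) {x : ℝ} (hx : x ∈ Set.Ioo (0:ℝ) 2) :
    gK e x = x ^ ((1+e)-1 : ℝ) * (2 - x) ^ ((1+e)-1 : ℝ) := by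
  have h1 : (0:ℝ) < x * (2 - x) := by nlinarith [hx.1, hx.2]
  rw [gK, max_eq_left h1.le, show ((1+e)-1 : ℝ) = e by ring,
    Real.mul_rpow hx.1.le (by linarith [hx.2])]

lemma gK_integ {e : ℝ} (he : 0 < e) (k : ℕ) : Integrable (fun u => u ^ k * gK e u) := by
  apply integrable_of_zero_off measurableSet_Ioo
    (fun u hu => by rw [gK_zero he hu, mul_zero])
  apply IntegrableOn.mono_set _ Set.Ioo_subset_Icc_self
  exact ((continuous_pow k).mul (gK_cont he)).integrableOn_Icc

lemma gK_mom0_pos {e : ℝ} (he : 0 < e) : 0 < ∫ u, u ^ 0 * gK e u := by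
  rw [integral_of_zero_off measurableSet_Ioo
    (fun u hu => by rw [gK_zero he hu, mul_zero]), ← integral_Ioo_eq_interval (by norm_num)]
  apply intervalIntegral.intervalIntegral_pos_of_pos_on
  · exact (gK_integ he 0).intervalIntegrable
  · intro u hu
    rw [pow_zero, one_mul]
    exact gK_pos hu
  · norm_num

lemma gK_rec {e : ℝ} (he : 0 < e) (n : ℕ) :
    (∫ u, u ^ (n+1) * gK e u) * ((n:ℝ) + (1+e) + (1+e))
      = (∫ u, u ^ n * gK e u) * (2 * ((n:ℝ) + (1+e))) :=
  rec_generic (by norm_num) (by linarith) (by linarith)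
    (fun x hx => gK_zero he hx) (fun x hx => gK_eqOn he hx) (gK_integ he) n

-- base solution
lemma Vbase_sol : IsSol 4 Vbase (fun n => ∫ x, x ^ n * Vbase x) :=
  ⟨Vbase_meas, Vbase_cont, fun _ hx => Vbase_pos hx, fun _ hx => Vbase_zero hx,
    Vbase_integ, fun _ => rfl⟩

lemma Vbase_mom0_pos : 0 < ∫ x, x ^ 0 * Vbase x := by
  rw [integral_of_zero_off measurableSet_Ioo
    (fun u hu => by rw [Vbase_zero hu, mul_zero]), ← integral_Ioo_eq_interval (by norm_num)]
  apply intervalIntegral.intervalIntegral_pos_of_pos_on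
  · exact (Vbase_integ 0).intervalIntegrable
  · intro u hu
    rw [pow_zero, one_mul]
    exact Vbase_pos hu
  · norm_num

lemma Vbase_rec (n : ℕ) :
    (∫ x, x ^ (n+1) * Vbase x) * ((n:ℝ) + (1/2) + (3/2))
      = (∫ x, x ^ n * Vbase x) * (4 * ((n:ℝ) + (1/2))) :=
  rec_generic (by norm_num) (by norm_num) (by norm_num)
    (fun x hx => Vbase_zero hx)
    (fun x hx => by
      rw [Vbase_eq hx, show ((1:ℝ)/2 - 1) = -(1/2) by norm_num,
        show ((3:ℝ)/2 - 1) = 1/2 by norm_num]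
      ring)
    Vbase_integ n

-- main induction
lemma claim (K : ℕ) (hK : 2 ≤ K) : ∃ V : ℝ → ℝ, ∃ μ : ℕ → ℝ,
    IsSol ((2:ℝ)^K) V μ ∧ 0 < μ 0 ∧
    ∀ n : ℕ, μ (n+1) * (∏ k ∈ Finset.range K, ((n:ℝ) + k + 1))
      = μ n * (∏ k ∈ Finset.range K, (2*(n:ℝ) + k + 1)) := by
  induction K with
  | zero => omega
  | succ K ih =>
    rcases Nat.lt_or_ge K 2 with hK2 | hK2
    · have hK1 : K = 1 := by omega
      subst hK1
      refine ⟨Vbase, fun n => ∫ x, x ^ n * Vbase x, ?_, Vbase_mom0_pos, ?_⟩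
      · have h4 : ((2:ℝ)) ^ (2:ℕ) = 4 := by norm_num
        rw [h4]
        exact Vbase_sol
      · intro n
        have h := Vbase_rec n
        simp only [Finset.prod_range_succ, Finset.prod_range_one, Nat.cast_zero, Nat.cast_one]
        push_cast
        linear_combination ((n:ℝ) + 1) * h
    · obtain ⟨V, μ, hsol, hμ0, hrec⟩ := ih hK2
      set e : ℝ := ((K:ℝ) - 1)/2 with hedef
      have hKcast : (2:ℝ) ≤ (K:ℝ) := by exact_mod_cast hK2
      have he : 0 < e := by rw [hedef]; linarith
      have hM : 0 < (2:ℝ)^K := by positivity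
      have hstep := conv_step hM hsol he
      refine ⟨fun x => ∫ t in Set.Ioo (0:ℝ) ((2:ℝ)^K), V t * gK e (x/t) / t,
        fun n => (∫ u, u ^ n * gK e u) * μ n, ?_, ?_, ?_⟩
      · have h2 : ((2:ℝ)) ^ (K+1) = 2 * (2:ℝ)^K := by rw [pow_succ]; ring
        rw [h2]
        exact hstep
      · exact mul_pos (gK_mom0_pos he) hμ0
      · intro n
        have h2 := gK_rec he n
        have ha : (n:ℝ) + (1+e) + (1+e) = (n:ℝ) + (K:ℝ) + 1 := by rw [hedef]; ring
        have hb : 2 * ((n:ℝ) + (1+e)) = 2*(n:ℝ) + (K:ℝ) + 1 := by rw [hedef]; ring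
        rw [ha, hb] at h2
        rw [Finset.prod_range_succ, Finset.prod_range_succ]
        have h3 := congrArg₂ (· * ·) h2 (hrec n)
        linear_combination h3

lemma seqD_zero (d : ℕ) : seqD d 0 = 1 := by
  rw [seqD]
  rw [Finset.prod_congr rfl (fun r _ => by
    rw [Nat.zero_add, div_self (Nat.cast_ne_zero.mpr (Nat.factorial_ne_zero r))]),
    Finset.prod_const_one, one_mul]
  rw [Finset.prod_congr rfl (fun s _ => by
    rw [show 2*0+2*s = 2*s by ring, div_self (Nat.cast_ne_zero.mpr (Nat.factorial_ne_zero _))]),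
    Finset.prod_const_one]

lemma prod_pair (m n : ℕ) :
    ∏ s ∈ Finset.range m, ((2*(n:ℝ)+2*s+1) * (2*(n:ℝ)+2*s+2))
      = ∏ k ∈ Finset.range (2*m), (2*(n:ℝ)+k+1) := by
  induction m with
  | zero => simp
  | succ m ih =>
    rw [Finset.prod_range_succ, ih, show 2*(m+1) = 2*m+1+1 by ring,
      Finset.prod_range_succ, Finset.prod_range_succ]
    push_cast
    ring

lemma seqD_rec {d : ℕ} (hd : Even d) (n : ℕ) :
    seqD d (n+1) * (∏ k ∈ Finset.range d, ((n:ℝ) + k + 1))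
      = seqD d n * (∏ k ∈ Finset.range d, (2*(n:ℝ) + k + 1)) := by
  obtain ⟨m, hm⟩ := hd
  subst hm
  have hd2 : (m+m)/2 = m := by omega
  have hd' : m+m = 2*m := by ring
  rw [seqD, seqD, hd2, hd']
  have hA : (∏ r ∈ Finset.range (2*m), (r.factorial:ℝ)/(((n+1)+r).factorial:ℝ))
        * (∏ k ∈ Finset.range (2*m), ((n:ℝ)+k+1))
      = ∏ r ∈ Finset.range (2*m), (r.factorial:ℝ)/((n+r).factorial:ℝ) := by
    rw [← Finset.prod_mul_distrib]
    apply Finset.prod_congr rfl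
    intro r _
    have hne : ((n+r).factorial : ℝ) ≠ 0 := Nat.cast_ne_zero.mpr (Nat.factorial_ne_zero _)
    have hfac : (((n+1)+r).factorial : ℝ) = ((n:ℝ)+r+1) * ((n+r).factorial:ℝ) := by
      rw [show (n+1)+r = (n+r)+1 by ring, Nat.factorial_succ]
      push_cast
      ring
    rw [hfac]
    field_simp
  have hB : ∏ s ∈ Finset.range m, ((2*(n+1)+2*s).factorial : ℝ)/((2*s).factorial:ℝ)
      = (∏ s ∈ Finset.range m, ((2*n+2*s).factorial:ℝ)/((2*s).factorial:ℝ))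
        * (∏ s ∈ Finset.range m, ((2*(n:ℝ)+2*s+1)*(2*(n:ℝ)+2*s+2))) := by
    rw [← Finset.prod_mul_distrib]
    apply Finset.prod_congr rfl
    intro s _
    have hne : ((2*s).factorial : ℝ) ≠ 0 := Nat.cast_ne_zero.mpr (Nat.factorial_ne_zero _)
    have h1 : 2*(n+1)+2*s = ((2*n+2*s) + 1) + 1 := by ring
    rw [h1, Nat.factorial_succ, Nat.factorial_succ]
    push_cast
    field_simp
    ring
  calc (∏ r ∈ Finset.range (2*m), (r.factorial:ℝ)/(((n+1)+r).factorial:ℝ))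
        * (∏ s ∈ Finset.range m, ((2*(n+1)+2*s).factorial : ℝ)/((2*s).factorial:ℝ))
        * (∏ k ∈ Finset.range (2*m), ((n:ℝ)+k+1))
      = ((∏ r ∈ Finset.range (2*m), (r.factorial:ℝ)/(((n+1)+r).factorial:ℝ))
          * (∏ k ∈ Finset.range (2*m), ((n:ℝ)+k+1)))
        * (∏ s ∈ Finset.range m, ((2*(n+1)+2*s).factorial : ℝ)/((2*s).factorial:ℝ)) := by
        ring
    _ = (∏ r ∈ Finset.range (2*m), (r.factorial:ℝ)/((n+r).factorial:ℝ))
        * ((∏ s ∈ Finset.range m, ((2*n+2*s).factorial:ℝ)/((2*s).factorial:ℝ))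
          * (∏ s ∈ Finset.range m, ((2*(n:ℝ)+2*s+1)*(2*(n:ℝ)+2*s+2)))) := by
        rw [hA, hB]
    _ = (∏ r ∈ Finset.range (2*m), (r.factorial:ℝ)/((n+r).factorial:ℝ))
        * (∏ s ∈ Finset.range m, ((2*n+2*s).factorial:ℝ)/((2*s).factorial:ℝ))
        * (∏ k ∈ Finset.range (2*m), (2*(n:ℝ)+k+1)) := by
        rw [prod_pair m n]
        ring

/-- The Hausdorff moment problem for `D_d(n)` on `[0, 2^d]` has a positive, absolutely
continuous solution. -/
theorem seqD_hausdorff_solution (d : ℕ) (hd : 4 ≤ d) (hdeven : Even d) :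
    ∃ V : ℝ → ℝ,
      ContinuousOn V (Set.Ioo (0 : ℝ) ((2 : ℝ) ^ (d : ℕ))) ∧
      (∀ x ∈ Set.Ioo (0 : ℝ) ((2 : ℝ) ^ (d : ℕ)), 0 < V x) ∧
      IntegrableOn V (Set.Icc (0 : ℝ) ((2 : ℝ) ^ (d : ℕ))) ∧
      (∀ n : ℕ, ∫ x in (0 : ℝ)..((2 : ℝ) ^ (d : ℕ)), x ^ n * V x = seqD d n) := by
  obtain ⟨V, μ, hsol, hμ0, hrec⟩ := claim d (by omega)
  have hM : (0:ℝ) < 2^d := by positivity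
  have hconv : ∀ n : ℕ, (∫ x in (0:ℝ)..(2:ℝ)^d, x ^ n * V x) = μ n := by
    intro n
    rw [integral_Ioo_eq_interval hM.le, ← integral_of_zero_off measurableSet_Ioo
      (fun x hx => by rw [hsol.zero x hx, mul_zero]), hsol.mom n]
  have hμ : ∀ n, μ n = seqD d n * μ 0 := by
    intro n
    induction n with
    | zero => rw [seqD_zero]; ring
    | succ n ihn =>
      have hP : (0:ℝ) < ∏ k ∈ Finset.range d, ((n:ℝ)+k+1) :=
        Finset.prod_pos (fun k _ => by positivity)
      have h1 := hrec n
      have h2 := seqD_rec hdeven n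
      apply mul_right_cancel₀ hP.ne'
      linear_combination h1 + (∏ k ∈ Finset.range d, (2*(n:ℝ)+k+1)) * ihn - μ 0 * h2
  refine ⟨fun x => V x / μ 0, hsol.cont.div_const _, fun x hx => div_pos (hsol.pos x hx) hμ0,
    ?_, ?_⟩
  · have hVi : Integrable V := by simpa using hsol.integ 0
    exact (hVi.div_const _).integrableOn
  · intro n
    have hfe : (fun x => x ^ n * (V x / μ 0)) = fun x => (x ^ n * V x) / μ 0 :=
      funext fun x => by ring
    calc ∫ x in (0:ℝ)..(2:ℝ)^d, x ^ n * (V x / μ 0)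
        = ∫ x in (0:ℝ)..(2:ℝ)^d, (x ^ n * V x) / μ 0 := by rw [hfe]
      _ = (∫ x in (0:ℝ)..(2:ℝ)^d, x ^ n * V x) / μ 0 := intervalIntegral.integral_div _ _
      _ = seqD d n := by rw [hconv n, hμ n, mul_div_assoc, div_self hμ0.ne', mul_one]
end

section
/- For every integer d ≥ 2 there exists a function W : ℝ → ℝ that is continuous and strictly positive on the open interval (0, d^d), integrable on [0, d^d], and satisfies ∫_0^{d^d} x^n W(x) dx = C_d(n) for every natural number n; i.e., the d-dimensional Catalan numbers form a Hausdorff moment sequence with a positive absolutely continuous representing density supported on [0, d^d]. -/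
open Finset MeasureTheory

namespace CatalanDAux

open Real Set MeasureTheory
open scoped Convolution

noncomputable def betaR (a b : ℝ) : ℝ :=
  ∫ t in Set.Ioo (0:ℝ) 1, t ^ (a-1) * (1-t) ^ (b-1)

lemma betaIntegrand_integrableOn {a b : ℝ} (ha : 0 < a) (hb : 0 < b) :
    IntegrableOn (fun t : ℝ => t ^ (a-1) * (1-t) ^ (b-1)) (Set.Ioo 0 1) := by
  have h := Complex.betaIntegral_convergent (u := (a:ℂ)) (v := (b:ℂ)) (by simpa) (by simpa)
  have h2 : IntegrableOn (fun x : ℝ => (x:ℂ) ^ ((a:ℂ)-1) * (1-(x:ℂ)) ^ ((b:ℂ)-1))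
      (Set.Ioo 0 1) :=
    ((intervalIntegrable_iff_integrableOn_Ioc_of_le zero_le_one).mp h).mono_set
      Set.Ioo_subset_Ioc_self
  have h3 : IntegrableOn (fun t : ℝ => ((t ^ (a-1) * (1-t) ^ (b-1) : ℝ) : ℂ)) (Set.Ioo 0 1) := by
    refine h2.congr_fun (fun x hx => ?_) measurableSet_Ioo
    have hx0 : (0:ℝ) ≤ x := hx.1.le
    have hx1 : (0:ℝ) ≤ 1 - x := by linarith [hx.2]
    dsimp only
    rw [show ((a:ℂ)-1) = ((a-1 : ℝ) : ℂ) by push_cast; ring,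
      show ((b:ℂ)-1) = ((b-1 : ℝ) : ℂ) by push_cast; ring,
      show (1-(x:ℂ)) = ((1-x : ℝ) : ℂ) by push_cast; ring,
      ← Complex.ofReal_cpow hx0, ← Complex.ofReal_cpow hx1, ← Complex.ofReal_mul]
  refine h3.re.congr (Filter.Eventually.of_forall fun x => ?_)
  simp

lemma betaR_complex {a b : ℝ} (ha : 0 < a) (hb : 0 < b) :
    Complex.betaIntegral a b = ((betaR a b : ℝ) : ℂ) := by
  rw [Complex.betaIntegral, intervalIntegral.integral_of_le zero_le_one,
    MeasureTheory.integral_Ioc_eq_integral_Ioo, betaR]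
  have hor : (∫ t in Set.Ioo (0:ℝ) 1, ((t ^ (a-1) * (1-t) ^ (b-1) : ℝ) : ℂ))
      = ((∫ t in Set.Ioo (0:ℝ) 1, t ^ (a-1) * (1-t) ^ (b-1) : ℝ) : ℂ) := by
    exact integral_ofReal
  rw [← hor]
  refine setIntegral_congr_fun measurableSet_Ioo (fun x hx => ?_)
  have hx0 : (0:ℝ) ≤ x := hx.1.le
  have hx1 : (0:ℝ) ≤ 1 - x := by linarith [hx.2]
  rw [show ((a:ℂ)-1) = ((a-1 : ℝ) : ℂ) by push_cast; ring,
    show ((b:ℂ)-1) = ((b-1 : ℝ) : ℂ) by push_cast; ring,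
    show (1-(x:ℂ)) = ((1-x : ℝ) : ℂ) by push_cast; ring,
    ← Complex.ofReal_cpow hx0, ← Complex.ofReal_cpow hx1, ← Complex.ofReal_mul]

lemma betaR_pos {a b : ℝ} (ha : 0 < a) (hb : 0 < b) : 0 < betaR a b := by
  rw [betaR]
  refine (setIntegral_pos_iff_support_of_nonneg_ae ?_ ?_).mpr ?_
  · filter_upwards [ae_restrict_mem measurableSet_Ioo] with x hx
    have : 0 < x ^ (a-1) * (1-x) ^ (b-1) :=
      mul_pos (rpow_pos_of_pos hx.1 _) (rpow_pos_of_pos (by linarith [hx.2]) _)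
    exact this.le
  · exact betaIntegrand_integrableOn ha hb
  · have hsub : Set.Ioo (0:ℝ) 1 ⊆ Function.support (fun t : ℝ => t ^ (a-1) * (1-t) ^ (b-1)) ∩
        Set.Ioo 0 1 := by
      intro x hx
      refine ⟨?_, hx⟩
      have : 0 < x ^ (a-1) * (1-x) ^ (b-1) :=
        mul_pos (rpow_pos_of_pos hx.1 _) (rpow_pos_of_pos (by linarith [hx.2]) _)
      exact this.ne'
    calc (0:ENNReal) < volume (Set.Ioo (0:ℝ) 1) := by simp
      _ ≤ _ := measure_mono hsub

lemma betaR_rec {a b : ℝ} (ha : 0 < a) (hb : 0 < b) :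
    (a + b) * betaR (a+1) b = a * betaR a b := by
  have key := Complex.betaIntegral_recurrence (u := (a:ℂ)) (v := (b:ℂ)) (by simpa) (by simpa)
  rw [show ((a:ℂ)+1) = ((a+1 : ℝ) : ℂ) by push_cast; ring,
    show ((b:ℂ)+1) = ((b+1 : ℝ) : ℂ) by push_cast; ring,
    betaR_complex ha (by linarith), betaR_complex (by linarith) hb] at key
  have key2 : a * betaR a (b+1) = b * betaR (a+1) b := by exact_mod_cast key
  have hsplit : betaR a (b+1) = betaR a b - betaR (a+1) b := by
    rw [betaR, betaR, betaR, ← integral_sub (betaIntegrand_integrableOn ha hb)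
      (betaIntegrand_integrableOn (by linarith) hb)]
    refine setIntegral_congr_fun measurableSet_Ioo (fun x hx => ?_)
    have hx0 : x ≠ 0 := hx.1.ne'
    have hx1 : (1:ℝ) - x ≠ 0 := by have := hx.2; intro h; rw [sub_eq_zero] at h; linarith
    have e1 : (1-x) ^ (b+1-1) = (1-x) ^ (b-1) * (1-x) := by
      rw [show b+1-1 = (b-1)+1 by ring, rpow_add_one hx1]
    have e2 : x ^ (a+1-1) = x ^ (a-1) * x := by
      rw [show a+1-1 = (a-1)+1 by ring, rpow_add_one hx0]
    rw [e1, e2]; ring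
  rw [hsplit] at key2
  ring_nf at key2 ⊢
  linarith

noncomputable def hFun (a b : ℝ) (y : ℝ) : ℝ :=
  Real.exp (-(a*y)) * (max (1 - Real.exp (-y)) 0) ^ (b-1)

lemma hFun_continuous {a b : ℝ} (hb : 1 < b) : Continuous (hFun a b) := by
  have c1 : Continuous fun y : ℝ => Real.exp (-(a*y)) := by continuity
  have c2 : Continuous fun y : ℝ => max (1 - Real.exp (-y)) 0 := by continuity
  exact c1.mul (c2.rpow_const (fun x => Or.inr (by linarith)))

lemma hFun_zero {a b : ℝ} (hb : 1 < b) {y : ℝ} (hy : y ≤ 0) : hFun a b y = 0 := by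
  rw [hFun, max_eq_right (by linarith [Real.one_le_exp (by linarith : 0 ≤ -y)]),
    Real.zero_rpow (by linarith), mul_zero]

lemma hFun_pos {a b : ℝ} {y : ℝ} (hy : 0 < y) : 0 < hFun a b y := by
  have h1 : 0 < 1 - Real.exp (-y) := by
    have := Real.exp_lt_one_iff.mpr (by linarith : -y < 0); linarith
  exact mul_pos (Real.exp_pos _)
    (Real.rpow_pos_of_pos (lt_max_of_lt_left h1) _)

lemma hFun_nonneg (a b y : ℝ) : 0 ≤ hFun a b y :=
  mul_nonneg (Real.exp_nonneg _) (Real.rpow_nonneg (le_max_right _ _) _)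

lemma hFun_le_one {a b : ℝ} (ha : 0 < a) (hb : 1 < b) (y : ℝ) : hFun a b y ≤ 1 := by
  rcases le_or_gt y 0 with hy | hy
  · rw [hFun_zero hb hy]; norm_num
  · rw [hFun]
    have h1 : Real.exp (-(a*y)) ≤ 1 := Real.exp_le_one_iff.mpr (by nlinarith)
    have h2 : max (1 - Real.exp (-y)) 0 ≤ 1 :=
      max_le (by linarith [Real.exp_pos (-y)]) zero_le_one
    have h3 : (max (1 - Real.exp (-y)) 0) ^ (b-1) ≤ 1 :=
      Real.rpow_le_one (le_max_right _ _) h2 (by linarith)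
    nlinarith [Real.rpow_nonneg (le_max_right (1 - Real.exp (-y)) 0) (b-1),
      Real.exp_nonneg (-(a*y))]

lemma hFun_integrable {a b : ℝ} (ha : 0 < a) (hb : 1 < b) : Integrable (hFun a b) := by
  have hind : Integrable ((Set.Ioi (0:ℝ)).indicator fun y => Real.exp (-(a*y))) := by
    rw [integrable_indicator_iff measurableSet_Ioi]
    simpa [neg_mul] using exp_neg_integrableOn_Ioi 0 ha
  refine hind.mono' (hFun_continuous hb).aestronglyMeasurable ?_
  filter_upwards with y
  rcases le_or_gt y 0 with hy | hy
  · rw [hFun_zero hb hy, Set.indicator_of_notMem (by simpa using hy)]; simp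
  · rw [Set.indicator_of_mem (by simpa using hy), Real.norm_of_nonneg (hFun_nonneg a b y), hFun]
    exact mul_le_of_le_one_right (Real.exp_nonneg _)
      (Real.rpow_le_one (le_max_right _ _)
        (max_le (by linarith [Real.exp_pos (-y)]) zero_le_one) (by linarith))

lemma image_exp_neg : (fun y : ℝ => Real.exp (-y)) '' (Set.Ioi 0) = Set.Ioo 0 1 := by
  ext t
  constructor
  · rintro ⟨y, hy, rfl⟩
    exact ⟨Real.exp_pos _, Real.exp_lt_one_iff.mpr (by simpa using hy)⟩
  · rintro ⟨h0, h1⟩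
    exact ⟨-Real.log t, by simpa using Real.log_neg h0 h1, by simp [Real.exp_log h0]⟩

lemma hasDeriv_exp_neg : ∀ y ∈ Set.Ioi (0:ℝ),
    HasDerivWithinAt (fun y : ℝ => Real.exp (-y)) (-Real.exp (-y)) (Set.Ioi 0) y := by
  intro y _
  have h := ((Real.hasDerivAt_exp (-y)).comp y (hasDerivAt_neg y))
  simpa [mul_comm, Function.comp_def] using h.hasDerivWithinAt

lemma injOn_exp_neg : Set.InjOn (fun y : ℝ => Real.exp (-y)) (Set.Ioi 0) :=
  fun _ _ _ _ h => neg_injective (Real.exp_injective h)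

lemma hFun_moment {a b : ℝ} (ha : 0 < a) (hb : 1 < b) (n : ℕ) :
    ∫ y : ℝ, Real.exp (-((n:ℝ)*y)) * hFun a b y = betaR ((n:ℝ)+a) b := by
  rw [betaR, ← image_exp_neg,
    integral_image_eq_integral_abs_deriv_smul measurableSet_Ioi hasDeriv_exp_neg injOn_exp_neg
      (fun t => t ^ ((n:ℝ)+a-1) * (1-t) ^ (b-1)),
    ← setIntegral_eq_integral_of_forall_compl_eq_zero
      (s := Set.Ioi (0:ℝ)) (f := fun y => Real.exp (-((n:ℝ)*y)) * hFun a b y)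
      (fun y hy => by show Real.exp _ * hFun a b y = 0; rw [hFun_zero hb (by simpa using hy), mul_zero])]
  refine setIntegral_congr_fun measurableSet_Ioi (fun y hy => ?_)
  have hy' : (0:ℝ) < y := hy
  have hmax : max (1 - Real.exp (-y)) 0 = 1 - Real.exp (-y) :=
    max_eq_left (by linarith [Real.exp_le_one_iff.mpr (by linarith : -y ≤ 0)])
  rw [smul_eq_mul, abs_neg, abs_of_pos (Real.exp_pos _), hFun, hmax,
    Real.rpow_def_of_pos (Real.exp_pos _), Real.log_exp]
  rw [show Real.exp (-((n:ℝ)*y)) * (Real.exp (-(a*y)) * (1 - Real.exp (-y)) ^ (b-1))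
      = (Real.exp (-((n:ℝ)*y)) * Real.exp (-(a*y))) * (1 - Real.exp (-y)) ^ (b-1) by ring,
    ← Real.exp_add,
    show Real.exp (-y) * (Real.exp (-y * ((n:ℝ)+a-1)) * (1 - Real.exp (-y)) ^ (b-1))
      = (Real.exp (-y) * Real.exp (-y * ((n:ℝ)+a-1))) * (1 - Real.exp (-y)) ^ (b-1) by ring,
    ← Real.exp_add]
  congr 1
  ring

open scoped Convolution

structure Good (U : ℝ → ℝ) (m : ℕ → ℝ) : Prop where
  cont : Continuous U
  zero : ∀ y ≤ (0:ℝ), U y = 0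
  pos : ∀ y : ℝ, 0 < y → 0 < U y
  bdd : ∃ C, ∀ y, U y ≤ C
  int : Integrable U
  mom : ∀ n : ℕ, ∫ y : ℝ, Real.exp (-((n:ℝ)*y)) * U y = m n

lemma Good.nonneg {U m} (h : Good U m) (y : ℝ) : 0 ≤ U y := by
  rcases le_or_gt y 0 with hy | hy
  · exact (h.zero y hy).ge
  · exact (h.pos y hy).le

lemma integrable_weight {U : ℝ → ℝ} (hc : Continuous U) (hz : ∀ y ≤ (0:ℝ), U y = 0)
    (hnn : ∀ y, 0 ≤ U y) (hi : Integrable U) (n : ℕ) :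
    Integrable (fun y => Real.exp (-((n:ℝ)*y)) * U y) := by
  refine hi.mono' ((Real.continuous_exp.comp (by continuity)).mul hc).aestronglyMeasurable ?_
  filter_upwards with y
  rcases le_or_gt y 0 with hy | hy
  · rw [hz y hy]; simp [hnn y]
  · rw [Real.norm_of_nonneg (mul_nonneg (Real.exp_nonneg _) (hnn y))]
    calc Real.exp (-((n:ℝ)*y)) * U y ≤ 1 * U y := by
          refine mul_le_mul_of_nonneg_right (Real.exp_le_one_iff.mpr ?_) (hnn y)
          have : (0:ℝ) ≤ (n:ℝ) * y := mul_nonneg (Nat.cast_nonneg n) hy.le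
          linarith
      _ = U y := one_mul _

lemma hFun_good {a b : ℝ} (ha : 0 < a) (hb : 1 < b) :
    Good (hFun a b) (fun n => betaR ((n:ℝ)+a) b) :=
  ⟨hFun_continuous hb, fun _ hy => hFun_zero hb hy, fun _ hy => hFun_pos hy,
    ⟨1, hFun_le_one ha hb⟩, hFun_integrable ha hb, hFun_moment ha hb⟩

theorem Good.conv {U : ℝ → ℝ} {m : ℕ → ℝ} (hU : Good U m) {a b : ℝ} (ha : 0 < a) (hb : 1 < b) :
    Good (U ⋆[ContinuousLinearMap.mul ℝ ℝ] hFun a b) (fun n => m n * betaR ((n:ℝ)+a) b) := by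
  have hcontH := hFun_continuous (a := a) hb
  have hintH := hFun_integrable ha hb
  have happly : ∀ x, (U ⋆[ContinuousLinearMap.mul ℝ ℝ] hFun a b) x
      = ∫ t, U t * hFun a b (x - t) := by
    intro x; rw [convolution_def]; simp [ContinuousLinearMap.mul_apply']
  have hInt : ∀ x, Integrable (fun t => U t * hFun a b (x - t)) := by
    intro x
    obtain ⟨C, hC⟩ := hU.bdd
    have hC0 : 0 ≤ C := le_trans (hU.nonneg 0) (hC 0)
    refine ((hintH.comp_sub_left x).const_mul C).mono'
      (hU.cont.mul (hcontH.comp (continuous_const.sub continuous_id))).aestronglyMeasurable ?_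
    filter_upwards with t
    rw [Real.norm_of_nonneg (mul_nonneg (hU.nonneg t) (hFun_nonneg _ _ _))]
    exact mul_le_mul (hC t) le_rfl (hFun_nonneg _ _ _) hC0
  refine ⟨?_, ?_, ?_, ?_, ?_, ?_⟩
  · have hbdd : BddAbove (Set.range fun x => ‖hFun a b x‖) := by
      refine ⟨1, ?_⟩; rintro _ ⟨y, rfl⟩
      show ‖hFun a b y‖ ≤ 1
      rw [Real.norm_of_nonneg (hFun_nonneg _ _ _)]; exact hFun_le_one ha hb y
    exact hbdd.continuous_convolution_right_of_integrable _ hU.int hcontH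
  · intro x hx
    rw [happly]
    have hz : ∀ t, U t * hFun a b (x - t) = 0 := by
      intro t
      rcases le_or_gt t 0 with ht | ht
      · rw [hU.zero t ht, zero_mul]
      · rw [hFun_zero hb (by linarith), mul_zero]
    simp [hz]
  · intro x hx
    rw [happly]
    have hnn : ∀ t, 0 ≤ U t * hFun a b (x - t) := fun t =>
      mul_nonneg (hU.nonneg t) (hFun_nonneg _ _ _)
    refine (integral_pos_iff_support_of_nonneg_ae
      (Filter.Eventually.of_forall hnn) (hInt x)).mpr ?_
    have hopen : IsOpen (Function.support fun t => U t * hFun a b (x - t)) :=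
      (hU.cont.mul (hcontH.comp (continuous_const.sub continuous_id))).isOpen_support
    refine hopen.measure_pos volume ⟨x/2, ?_⟩
    have : 0 < U (x/2) * hFun a b (x - x/2) :=
      mul_pos (hU.pos _ (by linarith))
        (by rw [show x - x/2 = x/2 by ring]; exact hFun_pos (by linarith))
    exact this.ne'
  · refine ⟨∫ t, U t, fun x => ?_⟩
    rw [happly]
    refine integral_mono (hInt x) hU.int (fun t => ?_)
    exact mul_le_of_le_one_right (hU.nonneg t) (hFun_le_one ha hb _)
  · exact hU.int.integrable_convolution _ hintH
  · intro n
    have hUn := integrable_weight hU.cont hU.zero hU.nonneg hU.int n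
    have hHn : Integrable (fun y => Real.exp (-((n:ℝ)*y)) * hFun a b y) :=
      integrable_weight hcontH (fun y hy => hFun_zero hb hy) (hFun_nonneg a b) hintH n
    have key : (fun x => Real.exp (-((n:ℝ)*x)) * (U ⋆[ContinuousLinearMap.mul ℝ ℝ] hFun a b) x)
        = ((fun t => Real.exp (-((n:ℝ)*t)) * U t) ⋆[ContinuousLinearMap.mul ℝ ℝ]
            (fun s => Real.exp (-((n:ℝ)*s)) * hFun a b s)) := by
      funext x
      simp only [convolution_def, ContinuousLinearMap.mul_apply']
      rw [← integral_const_mul]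
      refine integral_congr_ae (Filter.Eventually.of_forall fun t => ?_)
      have hsplit : Real.exp (-((n:ℝ)*x))
          = Real.exp (-((n:ℝ)*t)) * Real.exp (-((n:ℝ)*(x-t))) := by
        rw [← Real.exp_add]; congr 1; ring
      show Real.exp (-((n:ℝ)*x)) * (U t * hFun a b (x - t)) = _
      rw [hsplit]; ring
    calc ∫ x : ℝ, Real.exp (-((n:ℝ)*x)) * (U ⋆[ContinuousLinearMap.mul ℝ ℝ] hFun a b) x
        = ∫ x : ℝ, ((fun t => Real.exp (-((n:ℝ)*t)) * U t) ⋆[ContinuousLinearMap.mul ℝ ℝ]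
            (fun s => Real.exp (-((n:ℝ)*s)) * hFun a b s)) x := by rw [key]
      _ = (∫ t : ℝ, Real.exp (-((n:ℝ)*t)) * U t) * (∫ s : ℝ, Real.exp (-((n:ℝ)*s)) * hFun a b s) := by
          rw [integral_convolution _ hUn hHn]; simp [ContinuousLinearMap.mul_apply']
      _ = m n * betaR ((n:ℝ)+a) b := by rw [hU.mom n, hFun_moment ha hb n]

noncomputable def Useq (d : ℕ) : ℕ → ℝ → ℝ
  | 0 => hFun (1/(d:ℝ)) (2 - 1/(d:ℝ))
  | (k+1) => (Useq d k) ⋆[ContinuousLinearMap.mul ℝ ℝ]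
      hFun (((k:ℝ)+2)/(d:ℝ)) (((k:ℝ)+3) - ((k:ℝ)+2)/(d:ℝ))

lemma paramA_pos {d : ℕ} (hd : 2 ≤ d) (x : ℝ) (hx : 0 ≤ x) : 0 < (x+1)/(d:ℝ) := by
  have : (2:ℝ) ≤ d := by exact_mod_cast hd
  positivity

lemma paramB_gt {d : ℕ} (hd : 2 ≤ d) (x : ℝ) (hx : 0 ≤ x) : 1 < (x+2) - (x+1)/(d:ℝ) := by
  have h2 : (2:ℝ) ≤ d := by exact_mod_cast hd
  have : (x+1)/(d:ℝ) < x+1 := div_lt_self (by linarith) (by linarith)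
  linarith

lemma Useq_good (d : ℕ) (hd : 2 ≤ d) (k : ℕ) :
    Good (Useq d k)
      (fun n => ∏ j ∈ Finset.range (k+1),
        betaR ((n:ℝ) + ((j:ℝ)+1)/(d:ℝ)) (((j:ℝ)+2) - ((j:ℝ)+1)/(d:ℝ))) := by
  induction k with
  | zero =>
    have h := hFun_good (paramA_pos hd 0 le_rfl) (paramB_gt hd 0 le_rfl)
    have e : (fun n : ℕ => ∏ j ∈ Finset.range 1,
        betaR ((n:ℝ) + ((j:ℝ)+1)/(d:ℝ)) (((j:ℝ)+2) - ((j:ℝ)+1)/(d:ℝ)))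
        = fun n : ℕ => betaR ((n:ℝ) + (0+1)/(d:ℝ)) ((0+2) - (0+1)/(d:ℝ)) := by
      funext n; simp
    show Good (hFun (1/(d:ℝ)) (2 - 1/(d:ℝ))) _
    rw [e]
    norm_num at h ⊢
    exact h
  | succ k ih =>
    have h := ih.conv (a := ((k:ℝ)+2)/(d:ℝ)) (b := ((k:ℝ)+3) - ((k:ℝ)+2)/(d:ℝ))
      (by simpa [show ((k:ℝ)+1)+1 = (k:ℝ)+2 by ring] using paramA_pos hd ((k:ℝ)+1) (by positivity))
      (by simpa [show ((k:ℝ)+1)+2 = (k:ℝ)+3 by ring, show ((k:ℝ)+1)+1 = (k:ℝ)+2 by ring] using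
        paramB_gt hd ((k:ℝ)+1) (by positivity))
    have e : (fun n : ℕ => ∏ j ∈ Finset.range (k+1+1),
        betaR ((n:ℝ) + ((j:ℝ)+1)/(d:ℝ)) (((j:ℝ)+2) - ((j:ℝ)+1)/(d:ℝ)))
        = fun n : ℕ => (∏ j ∈ Finset.range (k+1),
            betaR ((n:ℝ) + ((j:ℝ)+1)/(d:ℝ)) (((j:ℝ)+2) - ((j:ℝ)+1)/(d:ℝ)))
          * betaR ((n:ℝ) + (((k:ℝ)+2))/(d:ℝ)) ((((k:ℝ)+3)) - (((k:ℝ)+2))/(d:ℝ)) := by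
      funext n
      rw [Finset.prod_range_succ]
      congr 1
      congr 1 <;> (push_cast; ring)
    show Good (Useq d (k+1)) _
    rw [e]
    exact h

lemma factorial_add_prod (M e : ℕ) :
    ((M + e).factorial : ℝ) = (M.factorial : ℝ) * ∏ k ∈ Finset.range e, ((M:ℝ) + k + 1) := by
  induction e with
  | zero => simp
  | succ e ih =>
    rw [show M + (e+1) = (M+e) + 1 by ring, Nat.factorial_succ, Finset.prod_range_succ]
    push_cast
    rw [ih]
    ring

lemma catalanD_zero (d : ℕ) : catalanD d 0 = 1 := by
  rw [catalanD]
  simp only [Nat.mul_zero, Nat.factorial_zero, Nat.cast_one, mul_one, Nat.zero_add]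
  refine Finset.prod_eq_one (fun p _ => ?_)
  exact div_self (by exact_mod_cast (Nat.factorial_ne_zero p))

lemma catalanD_rec (d n : ℕ) (hd : 1 ≤ d) :
    catalanD d (n+1) * ∏ j ∈ Finset.range (d-1), ((n:ℝ)+(j:ℝ)+2)
      = catalanD d n * (d:ℝ)^d * ∏ j ∈ Finset.range (d-1), ((n:ℝ)+((j:ℝ)+1)/(d:ℝ)) := by
  obtain ⟨e, rfl⟩ : ∃ e, d = e + 1 := ⟨d-1, by omega⟩
  simp only [Nat.add_sub_cancel]
  set D : ℝ := ((e:ℕ):ℝ) + 1 with hD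
  have hDcast : ((e+1 : ℕ):ℝ) = D := by push_cast; ring
  have hD0 : D ≠ 0 := by positivity
  have hn1 : ((n:ℝ)+1) ≠ 0 := by positivity
  have hP2 : (∏ j ∈ Finset.range e, ((n:ℝ)+(j:ℝ)+2)) ≠ 0 := by
    refine Finset.prod_ne_zero_iff.mpr (fun j _ => ?_)
    positivity
  -- right-hand side power-product transform
  have hpow : ((((e+1):ℕ)):ℝ)^(e+1) * ∏ j ∈ Finset.range e, ((n:ℝ)+((j:ℝ)+1)/(((e+1):ℕ):ℝ))
      = D * ∏ j ∈ Finset.range e, (D*(n:ℝ) + (j:ℝ) + 1) := by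
    rw [hDcast]
    have hpe : D^(e+1) = (∏ _j ∈ Finset.range e, D) * D := by
      rw [Finset.prod_const, Finset.card_range, ← pow_succ]
    rw [hpe, mul_comm (∏ _j ∈ Finset.range e, D) D, mul_assoc, ← Finset.prod_mul_distrib]
    congr 1
    refine Finset.prod_congr rfl (fun j _ => ?_)
    field_simp
    ring
  have hA : (((e+1)*(n+1)).factorial:ℝ)
      = (((e+1)*n).factorial:ℝ) * ∏ k ∈ Finset.range (e+1), ((((e+1)*n : ℕ) : ℝ) + (k:ℝ) + 1) := by
    rw [show (e+1)*(n+1) = ((e+1)*n) + (e+1) by ring]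
    exact factorial_add_prod ((e+1)*n) (e+1)
  have hB : ∀ p : ℕ, ((n+1+p).factorial:ℝ) = ((n+p).factorial:ℝ) * ((n:ℝ)+p+1) := by
    intro p
    rw [show n+1+p = (n+p)+1 by ring, Nat.factorial_succ]
    push_cast
    ring
  have hprod : ∏ p ∈ Finset.range (e+1), (p.factorial:ℝ)/(((n+1)+p).factorial:ℝ)
      = (∏ p ∈ Finset.range (e+1), (p.factorial:ℝ)/((n+p).factorial:ℝ))
        * (∏ p ∈ Finset.range (e+1), ((n:ℝ)+p+1))⁻¹ := by
    rw [← Finset.prod_inv_distrib, ← Finset.prod_mul_distrib]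
    refine Finset.prod_congr rfl (fun p _ => ?_)
    rw [show (n+1)+p = n+1+p from rfl, hB p, div_mul_eq_div_div, div_eq_mul_inv]
  have hC : ∏ p ∈ Finset.range (e+1), ((n:ℝ)+p+1)
      = ((n:ℝ)+1) * ∏ j ∈ Finset.range e, ((n:ℝ)+(j:ℝ)+2) := by
    rw [Finset.prod_range_succ']
    rw [Finset.prod_congr rfl (fun j (_ : j ∈ Finset.range e) =>
      show ((n:ℝ)+((j+1:ℕ):ℝ)+1) = ((n:ℝ)+(j:ℝ)+2) from by push_cast; ring)]
    push_cast
    ring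
  have hDprod : ∏ k ∈ Finset.range (e+1), ((((e+1)*n : ℕ) : ℝ) + (k:ℝ) + 1)
      = (∏ k ∈ Finset.range e, (D*(n:ℝ) + (k:ℝ) + 1)) * (D*((n:ℝ)+1)) := by
    rw [Finset.prod_range_succ]
    rw [Finset.prod_congr rfl (fun k (_ : k ∈ Finset.range e) =>
      show ((((e+1)*n : ℕ) : ℝ) + (k:ℝ) + 1) = (D*(n:ℝ) + (k:ℝ) + 1) from by rw [hD]; push_cast; ring)]
    congr 1
    push_cast
    ring
  rw [catalanD, catalanD, hA, hprod, hC, hDprod]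
  conv_rhs => rw [mul_assoc]
  rw [hpow]
  field_simp

lemma key_identity (d : ℕ) (hd : 2 ≤ d) (n : ℕ) :
    ((d:ℝ)^d)^n * ∏ j ∈ Finset.range (d-1),
        betaR ((n:ℝ) + ((j:ℝ)+1)/(d:ℝ)) (((j:ℝ)+2) - ((j:ℝ)+1)/(d:ℝ))
      = catalanD d n * ∏ j ∈ Finset.range (d-1),
        betaR (((j:ℝ)+1)/(d:ℝ)) (((j:ℝ)+2) - ((j:ℝ)+1)/(d:ℝ)) := by
  have hdR : (0:ℝ) < (d:ℝ) := by
    have : 0 < d := by omega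
    exact_mod_cast this
  induction n with
  | zero => simp [catalanD_zero]
  | succ n ih =>
    have hP : (∏ j ∈ Finset.range (d-1), ((n:ℝ)+(j:ℝ)+2)) ≠ 0 := by
      refine Finset.prod_ne_zero_iff.mpr (fun j _ => ?_)
      positivity
    have hstep : ∀ j ∈ Finset.range (d-1),
        ((n:ℝ)+(j:ℝ)+2) * betaR (((n+1:ℕ):ℝ) + ((j:ℝ)+1)/(d:ℝ)) (((j:ℝ)+2) - ((j:ℝ)+1)/(d:ℝ))
        = ((n:ℝ)+((j:ℝ)+1)/(d:ℝ))
            * betaR ((n:ℝ)+((j:ℝ)+1)/(d:ℝ)) (((j:ℝ)+2) - ((j:ℝ)+1)/(d:ℝ)) := by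
      intro j _
      have ha' : 0 < (n:ℝ) + ((j:ℝ)+1)/(d:ℝ) :=
        add_pos_of_nonneg_of_pos (Nat.cast_nonneg n) (div_pos (by positivity) hdR)
      have hb' : 0 < ((j:ℝ)+2) - ((j:ℝ)+1)/(d:ℝ) := by
        have := paramB_gt hd (j:ℝ) (Nat.cast_nonneg j)
        linarith
      rw [show ((n+1:ℕ):ℝ) + ((j:ℝ)+1)/(d:ℝ) = ((n:ℝ) + ((j:ℝ)+1)/(d:ℝ)) + 1 by push_cast; ring,
        show (n:ℝ)+(j:ℝ)+2
          = ((n:ℝ) + ((j:ℝ)+1)/(d:ℝ)) + (((j:ℝ)+2) - ((j:ℝ)+1)/(d:ℝ)) by ring]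
      exact betaR_rec ha' hb'
    have hmerge : (∏ j ∈ Finset.range (d-1), ((n:ℝ)+(j:ℝ)+2))
        * (∏ j ∈ Finset.range (d-1),
            betaR (((n+1:ℕ):ℝ) + ((j:ℝ)+1)/(d:ℝ)) (((j:ℝ)+2) - ((j:ℝ)+1)/(d:ℝ)))
        = (∏ j ∈ Finset.range (d-1), ((n:ℝ)+((j:ℝ)+1)/(d:ℝ)))
          * ∏ j ∈ Finset.range (d-1),
              betaR ((n:ℝ)+((j:ℝ)+1)/(d:ℝ)) (((j:ℝ)+2) - ((j:ℝ)+1)/(d:ℝ)) := by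
      rw [← Finset.prod_mul_distrib, ← Finset.prod_mul_distrib]
      exact Finset.prod_congr rfl hstep
    have hrec := catalanD_rec d n (by omega)
    apply mul_right_cancel₀ hP
    calc ((d:ℝ)^d)^(n+1) * (∏ j ∈ Finset.range (d-1),
            betaR (((n+1:ℕ):ℝ) + ((j:ℝ)+1)/(d:ℝ)) (((j:ℝ)+2) - ((j:ℝ)+1)/(d:ℝ)))
          * (∏ j ∈ Finset.range (d-1), ((n:ℝ)+(j:ℝ)+2))
        = ((d:ℝ)^d) * (((d:ℝ)^d)^n)
            * ((∏ j ∈ Finset.range (d-1), ((n:ℝ)+(j:ℝ)+2))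
              * ∏ j ∈ Finset.range (d-1),
                  betaR (((n+1:ℕ):ℝ) + ((j:ℝ)+1)/(d:ℝ)) (((j:ℝ)+2) - ((j:ℝ)+1)/(d:ℝ))) := by
          ring
      _ = ((d:ℝ)^d) * (((d:ℝ)^d)^n)
            * ((∏ j ∈ Finset.range (d-1), ((n:ℝ)+((j:ℝ)+1)/(d:ℝ)))
              * ∏ j ∈ Finset.range (d-1),
                  betaR ((n:ℝ)+((j:ℝ)+1)/(d:ℝ)) (((j:ℝ)+2) - ((j:ℝ)+1)/(d:ℝ))) := by
          rw [hmerge]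
      _ = ((d:ℝ)^d) * (∏ j ∈ Finset.range (d-1), ((n:ℝ)+((j:ℝ)+1)/(d:ℝ)))
            * (((d:ℝ)^d)^n * ∏ j ∈ Finset.range (d-1),
                betaR ((n:ℝ)+((j:ℝ)+1)/(d:ℝ)) (((j:ℝ)+2) - ((j:ℝ)+1)/(d:ℝ))) := by
          ring
      _ = ((d:ℝ)^d) * (∏ j ∈ Finset.range (d-1), ((n:ℝ)+((j:ℝ)+1)/(d:ℝ)))
            * (catalanD d n * ∏ j ∈ Finset.range (d-1),
                betaR (((j:ℝ)+1)/(d:ℝ)) (((j:ℝ)+2) - ((j:ℝ)+1)/(d:ℝ))) := by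
          rw [ih]
      _ = (catalanD d n * ((d:ℝ)^d) * ∏ j ∈ Finset.range (d-1), ((n:ℝ)+((j:ℝ)+1)/(d:ℝ)))
            * ∏ j ∈ Finset.range (d-1),
                betaR (((j:ℝ)+1)/(d:ℝ)) (((j:ℝ)+2) - ((j:ℝ)+1)/(d:ℝ)) := by
          ring
      _ = (catalanD d (n+1) * ∏ j ∈ Finset.range (d-1), ((n:ℝ)+(j:ℝ)+2))
            * ∏ j ∈ Finset.range (d-1),
                betaR (((j:ℝ)+1)/(d:ℝ)) (((j:ℝ)+2) - ((j:ℝ)+1)/(d:ℝ)) := by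
          rw [← hrec]
      _ = catalanD d (n+1) * (∏ j ∈ Finset.range (d-1),
              betaR (((j:ℝ)+1)/(d:ℝ)) (((j:ℝ)+2) - ((j:ℝ)+1)/(d:ℝ)))
            * ∏ j ∈ Finset.range (d-1), ((n:ℝ)+(j:ℝ)+2) := by
          ring


end CatalanDAux

open CatalanDAux Real Set in
/-- The `d`-dimensional Catalan numbers form a Hausdorff moment sequence with a positive,
absolutely continuous representing density supported on `[0, d^d]`. -/
theorem catalanD_hausdorff_solution (d : ℕ) (hd : 2 ≤ d) :
    ∃ W : ℝ → ℝ,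
      ContinuousOn W (Set.Ioo (0 : ℝ) ((d : ℝ) ^ (d : ℕ))) ∧
      (∀ x ∈ Set.Ioo (0 : ℝ) ((d : ℝ) ^ (d : ℕ)), 0 < W x) ∧
      IntegrableOn W (Set.Icc (0 : ℝ) ((d : ℝ) ^ (d : ℕ))) ∧
      (∀ n : ℕ, ∫ x in (0 : ℝ)..((d : ℝ) ^ (d : ℕ)), x ^ n * W x = catalanD d n) := by
  obtain ⟨m2, rfl⟩ : ∃ m2, d = m2 + 2 := ⟨d-2, by omega⟩
  have hdR : (0:ℝ) < ((m2+2:ℕ):ℝ) := by positivity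
  set A : ℝ := ((m2+2 : ℕ):ℝ) ^ (m2+2) with hA
  have hApos : 0 < A := by positivity
  have good := Useq_good (m2+2) hd m2
  set U : ℝ → ℝ := Useq (m2+2) m2 with hU
  set Q : ℝ := ∏ j ∈ Finset.range (m2+1),
      betaR (((j:ℝ)+1)/((m2+2:ℕ):ℝ)) (((j:ℝ)+2) - ((j:ℝ)+1)/((m2+2:ℕ):ℝ)) with hQ
  have hQpos : 0 < Q := by
    refine Finset.prod_pos (fun j _ => betaR_pos ?_ ?_)
    · exact div_pos (by positivity) hdR
    · have := paramB_gt hd (j:ℝ) (Nat.cast_nonneg j); linarith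
  set c : ℝ := Q⁻¹ with hc
  have hcpos : 0 < c := inv_pos.mpr hQpos
  -- image and change of variables facts
  have himg : (fun y : ℝ => A * Real.exp (-y)) '' (Set.Ioi 0) = Set.Ioo 0 A := by
    ext t
    constructor
    · rintro ⟨y, hy, rfl⟩
      have hy' : (0:ℝ) < y := hy
      have he1 : Real.exp (-y) < 1 := Real.exp_lt_one_iff.mpr (by linarith)
      constructor
      · show 0 < A * Real.exp (-y); positivity
      · show A * Real.exp (-y) < A; nlinarith [Real.exp_pos (-y)]
    · intro ht
      refine ⟨-Real.log (t/A), ?_, ?_⟩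
      · have := Real.log_neg (div_pos ht.1 hApos) ((div_lt_one hApos).mpr ht.2)
        simpa using this
      · show A * Real.exp (-(-Real.log (t/A))) = t
        rw [neg_neg, Real.exp_log (div_pos ht.1 hApos)]
        field_simp
  have hderivA : ∀ y ∈ Set.Ioi (0:ℝ),
      HasDerivWithinAt (fun y : ℝ => A * Real.exp (-y)) (-(A * Real.exp (-y))) (Set.Ioi 0) y := by
    intro y hy
    have := (hasDeriv_exp_neg y hy).const_mul A
    simpa [mul_neg] using this
  have hinjA : Set.InjOn (fun y : ℝ => A * Real.exp (-y)) (Set.Ioi 0) :=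
    fun u hu v hv h => injOn_exp_neg hu hv (mul_left_cancel₀ hApos.ne' h)
  have hlogA : ∀ y : ℝ, Real.log (A / (A * Real.exp (-y))) = y := by
    intro y
    rw [show A / (A * Real.exp (-y)) = Real.exp y by
      rw [Real.exp_neg]; field_simp]
    exact Real.log_exp y
  refine ⟨fun x => c * (U (Real.log (A / x)) / x), ?_, ?_, ?_, ?_⟩
  · -- continuity
    refine continuousOn_const.mul (ContinuousOn.div ?_ continuous_id.continuousOn
      (fun x hx => hx.1.ne'))
    refine good.cont.comp_continuousOn ?_
    refine ContinuousOn.log ?_ (fun x hx => div_ne_zero hApos.ne' hx.1.ne')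
    exact continuousOn_const.div continuous_id.continuousOn (fun x hx => hx.1.ne')
  · -- positivity
    intro x hx
    have hgt : 1 < A / x := (one_lt_div hx.1).mpr hx.2
    exact mul_pos hcpos (div_pos (good.pos _ (Real.log_pos hgt)) hx.1)
  · -- integrability
    rw [integrableOn_Icc_iff_integrableOn_Ioo, ← himg,
      integrableOn_image_iff_integrableOn_abs_deriv_smul measurableSet_Ioi hderivA hinjA]
    refine ((good.int.const_mul c).integrableOn).congr_fun ?_ measurableSet_Ioi
    intro y hy
    have hAy : 0 < A * Real.exp (-y) := by positivity
    show c * U y = |-(A * Real.exp (-y))| •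
      (c * (U (Real.log (A / (A * Real.exp (-y)))) / (A * Real.exp (-y))))
    rw [abs_neg, abs_of_pos hAy, smul_eq_mul, hlogA y]
    field_simp
  · -- moments
    intro n
    rw [intervalIntegral.integral_of_le hApos.le, MeasureTheory.integral_Ioc_eq_integral_Ioo,
      ← himg, integral_image_eq_integral_abs_deriv_smul measurableSet_Ioi hderivA hinjA]
    have hpt : Set.EqOn
        (fun y => |-(A * Real.exp (-y))| • ((A * Real.exp (-y)) ^ n *
          (c * (U (Real.log (A / (A * Real.exp (-y)))) / (A * Real.exp (-y))))))
        (fun y => (c * A^n) * (Real.exp (-((n:ℝ)*y)) * U y)) (Set.Ioi 0) := by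
      intro y hy
      have hAy : 0 < A * Real.exp (-y) := by positivity
      show |-(A * Real.exp (-y))| * ((A * Real.exp (-y)) ^ n *
          (c * (U (Real.log (A / (A * Real.exp (-y)))) / (A * Real.exp (-y)))))
        = (c * A^n) * (Real.exp (-((n:ℝ)*y)) * U y)
      rw [abs_neg, abs_of_pos hAy, hlogA y, mul_pow, ← Real.exp_nat_mul,
        show (n:ℝ) * (-y) = -((n:ℝ)*y) by ring]
      field_simp
    rw [setIntegral_congr_fun measurableSet_Ioi hpt, MeasureTheory.integral_const_mul,
      setIntegral_eq_integral_of_forall_compl_eq_zero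
        (fun y hy => by
          show Real.exp (-((n:ℝ)*y)) * U y = 0
          rw [good.zero y (by simpa using hy), mul_zero]),
      good.mom n]
    have hki := key_identity (m2+2) hd n
    rw [show (m2+2)-1 = m2+1 from rfl, ← hA, ← hQ] at hki
    rw [mul_assoc, hki, hc, mul_comm (catalanD (m2+2) n) Q, ← mul_assoc,
      inv_mul_cancel₀ hQpos.ne', one_mul]
end
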